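/- Asymptotic completeness of full unbiased evaluation in the probabilistic Call-by-Value λ-calculus: for every multi-distribution m and every subdistribution q over NF, if m ⇒⇓ q then there exists a subdistribution p over NF with q ≤ p (pointwise) and m ⇉E⇓ p. -/

import Mathlib

/-- Terms of the probabilistic Call-by-Value λ-calculus `Λ⊕`, in de Bruijn
representation: `M ::= x | λx.M | M M | M ⊕ M`. -/
inductive PTm : Type
  | var : ℕ → PTm
  | lam : PTm → PTm
  | app : PTm → PTm → PTm
  | oplus : PTm → PTm → PTm
deriving DecidableEq

namespace PTm

/-- Lift (shift by one) the free variables of index `≥ d`. -/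
def lift (d : ℕ) : PTm → PTm
  | var n => if n < d then var n else var (n + 1)
  | lam M => lam (lift (d + 1) M)
  | app M N => app (lift d M) (lift d N)
  | oplus M N => oplus (lift d M) (lift d N)

/-- Capture-avoiding substitution `M[N/k]`. -/
def subst : PTm → ℕ → PTm → PTm
  | var n, k, N => if n = k then N else if k < n then var (n - 1) else var n
  | lam M, k, N => lam (subst M (k + 1) (lift 0 N))
  | app M₁ M₂, k, N => app (subst M₁ k N) (subst M₂ k N)
  | oplus M₁ M₂, k, N => oplus (subst M₁ k N) (subst M₂ k N)

end PTm

/-- Values: variables and abstractions. -/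
inductive IsValue : PTm → Prop
  | var (n : ℕ) : IsValue (PTm.var n)
  | lam (M : PTm) : IsValue (PTm.lam M)

/-- Full βv-reduction on terms: closure of `(λx.M)V ↦βv M[V/x]` (`V` a value) under
arbitrary contexts `C ::= ⟨⟩ | λx.C | C M | M C | C ⊕ M | M ⊕ C`. -/
inductive FullBv : PTm → PTm → Prop
  | beta {M V} : IsValue V → FullBv (PTm.app (PTm.lam M) V) (M.subst 0 V)
  | lam {M M'} : FullBv M M' → FullBv (PTm.lam M) (PTm.lam M')
  | appL {M M' N} : FullBv M M' → FullBv (PTm.app M N) (PTm.app M' N)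
  | appR {M N N'} : FullBv N N' → FullBv (PTm.app M N) (PTm.app M N')
  | oplusL {M M' N} : FullBv M M' → FullBv (PTm.oplus M N) (PTm.oplus M' N)
  | oplusR {M N N'} : FullBv N N' → FullBv (PTm.oplus M N) (PTm.oplus M N')

/-- Weak βv-reduction: closure of `↦βv` under weak contexts `W ::= ⟨⟩ | W M | M W`. -/
inductive WeakBv : PTm → PTm → Prop
  | beta {M V} : IsValue V → WeakBv (PTm.app (PTm.lam M) V) (M.subst 0 V)
  | appL {M M' N} : WeakBv M M' → WeakBv (PTm.app M N) (PTm.app M' N)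
  | appR {M N N'} : WeakBv N N' → WeakBv (PTm.app M N) (PTm.app M N')

/-- `OplusRed M M₁ M₂` : `M = W⟨P ⊕ Q⟩` for a weak context `W`, with branches
`M₁ = W⟨P⟩` and `M₂ = W⟨Q⟩`. -/
inductive OplusRed : PTm → PTm → PTm → Prop
  | root (M N : PTm) : OplusRed (PTm.oplus M N) M N
  | appL {P P₁ P₂ Q} : OplusRed P P₁ P₂ →
      OplusRed (PTm.app P Q) (PTm.app P₁ Q) (PTm.app P₂ Q)
  | appR {P Q Q₁ Q₂} : OplusRed Q Q₁ Q₂ →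
      OplusRed (PTm.app P Q) (PTm.app P Q₁) (PTm.app P Q₂)

/-- Multi-distributions: finite multisets of pairs `(p, M)`. -/
abbrev MDist := Multiset (NNReal × PTm)

/-- The multi-distribution `[1 M]`. -/
def single (M : PTm) : MDist := {((1 : NNReal), M)}

/-- A multi-distribution proper: all probabilities are in `(0,1]` and their sum is `≤ 1`. -/
def IsMDist (m : MDist) : Prop :=
  (∀ q ∈ m, 0 < q.1 ∧ q.1 ≤ 1) ∧ (m.map Prod.fst).sum ≤ 1

/-- One-step reduction `→ := →βv ∪ →⊕` from terms to multi-distributions: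
`C⟨(λx.M)V⟩ →βv [C⟨M[V/x]⟩]` and `W⟨M ⊕ N⟩ →⊕ [½ W⟨M⟩, ½ W⟨N⟩]`. -/
inductive Step : PTm → MDist → Prop
  | bv {M M'} : FullBv M M' → Step M (single M')
  | oplus {M M₁ M₂} : OplusRed M M₁ M₂ →
      Step M {((1 : NNReal) / 2, M₁), ((1 : NNReal) / 2, M₂)}

/-- Surface reduction `→s`: weak βv-steps together with all `→⊕`-steps. -/
inductive SStep : PTm → MDist → Prop
  | bv {M M'} : WeakBv M M' → SStep M (single M')
  | oplus {M M₁ M₂} : OplusRed M M₁ M₂ →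
      SStep M {((1 : NNReal) / 2, M₁), ((1 : NNReal) / 2, M₂)}

/-- A term is normal if it has no `→`-step. -/
def TmNormal (M : PTm) : Prop := ∀ m, ¬ Step M m

/-- A term is surface-normal if it has no `→s`-step. -/
def SurfNormal (M : PTm) : Prop := ∀ m, ¬ SStep M m

/-- The unbiased βv-strategy `⊳βv` on `Λ⊕`: weak βv-steps as long as there are any;
once the term has no weak βv-redex, iterate in the subterms. -/
inductive UnbBv : PTm → PTm → Prop
  | weak {M M'} : WeakBv M M' → UnbBv M M'
  | lam {P P'} : (∀ s, ¬ WeakBv (PTm.lam P) s) → UnbBv P P' →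
      UnbBv (PTm.lam P) (PTm.lam P')
  | appL {P P' Q} : (∀ s, ¬ WeakBv (PTm.app P Q) s) → UnbBv P P' →
      UnbBv (PTm.app P Q) (PTm.app P' Q)
  | appR {P Q Q'} : (∀ s, ¬ WeakBv (PTm.app P Q) s) → UnbBv Q Q' →
      UnbBv (PTm.app P Q) (PTm.app P Q')
  | oplusL {P P' Q} : (∀ s, ¬ WeakBv (PTm.oplus P Q) s) → UnbBv P P' →
      UnbBv (PTm.oplus P Q) (PTm.oplus P' Q)
  | oplusR {P Q Q'} : (∀ s, ¬ WeakBv (PTm.oplus P Q) s) → UnbBv Q Q' →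
      UnbBv (PTm.oplus P Q) (PTm.oplus P Q')

/-- Unbiased evaluation `⊳E` from terms to multi-distributions: a surface step if the
term is not surface-normal; otherwise an unbiased βv-step. -/
inductive EStep : PTm → MDist → Prop
  | surf {M m} : ¬ SurfNormal M → SStep M m → EStep M m
  | unb {M M'} : SurfNormal M → UnbBv M M' → EStep M (single M')

/-- Internal steps `⋫E`: `→`-steps that are not `⊳E`-steps. -/
def IStep (M : PTm) (m : MDist) : Prop := Step M m ∧ ¬ EStep M m

/-- Scalar multiplication `p • m` of a multi-distribution. -/
def scale (p : NNReal) (m : MDist) : MDist := m.map fun q => (p * q.1, q.2)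

/-- Lifting of a relation `r` from terms to multi-distributions, to a relation on
multi-distributions: `[M] ⇒r [M]`; `[M] ⇒r m` whenever `M r m`; and
`[pᵢ Mᵢ]ᵢ ⇒r Σᵢ pᵢ·mᵢ` whenever `[Mᵢ] ⇒r mᵢ` for each `i`. -/
inductive Lift (r : PTm → MDist → Prop) : MDist → MDist → Prop
  | zero : Lift r 0 0
  | keep {p M m n} : Lift r m n → Lift r ((p, M) ::ₘ m) ((p, M) ::ₘ n)
  | step {p M d m n} : r M d → Lift r m n → Lift r ((p, M) ::ₘ m) (scale p d + n)

/-- Full lifting of a relation `r` from terms to multi-distributions: as `Lift`, but a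
component may stay put only if it is a normal form. -/
inductive FullLift (r : PTm → MDist → Prop) : MDist → MDist → Prop
  | zero : FullLift r 0 0
  | keep {p M m n} : TmNormal M → FullLift r m n →
      FullLift r ((p, M) ::ₘ m) ((p, M) ::ₘ n)
  | step {p M d m n} : r M d → FullLift r m n →
      FullLift r ((p, M) ::ₘ m) (scale p d + n)

open Classical in
/-- The observation `obsN`: the subdistribution over normal forms carried by a
multi-distribution, `obsN(m)(N) = Σ { pᵢ : Mᵢ = N }` for `N` normal (and `0` on
non-normal terms). Subdistributions are ordered pointwise. -/
noncomputable def obsN (m : MDist) : PTm → NNReal := fun N =>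
  if TmNormal N then ((m.filter fun q => q.2 = N).map Prod.fst).sum else 0

/-- A multi-distribution is `R`-normal if it has no `R`-successor. -/
def MNormal (R : MDist → MDist → Prop) (m : MDist) : Prop := ∀ n, ¬ R m n

/-- An `R`-sequence from `m`: at each step either an `R`-step is performed, or the
current multi-distribution is `R`-normal and the sequence stays constant. -/
def MSeq (R : MDist → MDist → Prop) (m : MDist) (f : ℕ → MDist) : Prop :=
  f 0 = m ∧ ∀ i, R (f i) (f (i + 1)) ∨ (MNormal R (f i) ∧ f (i + 1) = f i)

/-- `m R⇓ p` : some `R`-sequence from `m` has limit (supremum of the pointwise-ordered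
subdistributions `obsN (f i)`) equal to `p`. -/
def MConv (R : MDist → MDist → Prop) (m : MDist) (p : PTm → NNReal) : Prop :=
  ∃ f : ℕ → MDist, MSeq R m f ∧ IsLUB (Set.range fun i => obsN (f i)) p

section Subst
namespace PTm

theorem lift_lift {d e : ℕ} (M : PTm) (h : d ≤ e) :
    lift d (lift e M) = lift (e+1) (lift d M) := by
  induction M generalizing d e with
  | var n =>
    by_cases h1 : n < e
    · by_cases h2 : n < d
      · simp [lift, if_pos h1, if_pos h2, if_pos (by omega : n < e+1), (by omega : n ≤ e)]
      · simp [lift, if_pos h1, if_neg h2, if_pos (by omega : n+1 < e+1),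
          if_neg (by omega : ¬ n < d)]
    · simp [lift, if_neg h1, if_neg (by omega : ¬ n < d),
        if_neg (by omega : ¬ n+1 < e+1), if_neg (by omega : ¬ n+1 < d)]
  | lam M ih => simp only [lift]; rw [ih (by omega : d+1 ≤ e+1)]
  | app M N ihM ihN => simp only [lift]; rw [ihM h, ihN h]
  | oplus M N ihM ihN => simp only [lift]; rw [ihM h, ihN h]

theorem subst_lift {d : ℕ} (M N : PTm) : (lift d M).subst d N = M := by
  induction M generalizing d N with
  | var n =>
    by_cases h : n < d
    · simp [lift, if_pos h, subst, if_neg (by omega : ¬ n = d),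
        if_neg (by omega : ¬ d < n)]
    · simp [lift, if_neg h, subst, if_neg (by omega : ¬ n+1 = d),
        if_pos (by omega : d < n+1), (by omega : d ≤ n)]
  | lam M ih => simp only [lift, subst]; rw [ih]
  | app M M' ihM ihN => simp only [lift, subst]; rw [ihM, ihN]
  | oplus M M' ihM ihN => simp only [lift, subst]; rw [ihM, ihN]

theorem lift_subst_le {d k : ℕ} (M N : PTm) (h : d ≤ k) :
    lift d (M.subst k N) = (lift d M).subst (k+1) (lift d N) := by
  induction M generalizing d k N with
  | var n =>
    rcases Nat.lt_trichotomy n k with h1 | h1 | h1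
    · by_cases h2 : n < d
      · simp [lift, subst, if_neg (by omega : ¬ n = k), if_neg (by omega : ¬ k < n),
          if_pos h2, if_neg (by omega : ¬ n = k+1), if_neg (by omega : ¬ k+1 < n)]
      · simp [lift, subst, if_neg (by omega : ¬ n = k), if_neg (by omega : ¬ k < n),
          if_neg h2, if_neg (by omega : ¬ n+1 = k+1), if_neg (by omega : ¬ k+1 < n+1)]
    · subst h1
      simp [lift, subst, if_pos rfl, if_neg (by omega : ¬ n < d),
        if_pos (by omega : n+1 = n+1)]
    · simp only [subst, if_neg (by omega : ¬ n = k), if_pos h1, lift,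
        if_neg (by omega : ¬ n - 1 < d), if_neg (by omega : ¬ n < d),
        if_neg (by omega : ¬ n+1 = k+1), if_pos (by omega : k+1 < n+1)]
      congr 1; omega
  | lam M ih =>
    simp only [lift, subst]
    rw [ih (lift 0 N) (by omega : d+1 ≤ k+1), ← lift_lift N (Nat.zero_le d)]
  | app M M' ihM ihN => simp only [lift, subst]; rw [ihM N h, ihN N h]
  | oplus M M' ihM ihN => simp only [lift, subst]; rw [ihM N h, ihN N h]

theorem lift_subst_ge {d k : ℕ} (M N : PTm) (h : k ≤ d) :
    lift d (M.subst k N) = (lift (d+1) M).subst k (lift d N) := by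
  induction M generalizing d k N with
  | var n =>
    rcases Nat.lt_trichotomy n k with h1 | h1 | h1
    · simp [lift, subst, if_neg (by omega : ¬ n = k), if_neg (by omega : ¬ k < n),
        if_pos (by omega : n < d), if_pos (by omega : n < d+1), if_pos (by omega : n ≤ d)]
    · subst h1
      simp [lift, subst, if_pos rfl, if_pos (by omega : n < d+1), if_pos h]
    · by_cases h2 : n < d + 1
      · simp [lift, subst, if_neg (by omega : ¬ n = k), if_pos h1,
          if_pos (by omega : n - 1 < d), if_pos h2, if_pos (by omega : n ≤ d)]
      · simp only [lift, subst, if_neg (by omega : ¬ n = k), if_pos h1,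
          if_neg (by omega : ¬ n - 1 < d), if_neg h2,
          if_neg (by omega : ¬ n + 1 = k), if_pos (by omega : k < n + 1)]
        congr 1; omega
  | lam M ih =>
    simp only [lift, subst]
    rw [ih (lift 0 N) (by omega : k+1 ≤ d+1), ← lift_lift N (Nat.zero_le d)]
  | app M M' ihM ihN => simp only [lift, subst]; rw [ihM N h, ihN N h]
  | oplus M M' ihM ihN => simp only [lift, subst]; rw [ihM N h, ihN N h]

theorem subst_subst {j k : ℕ} (M V W : PTm) (h : j ≤ k) :
    (M.subst j V).subst k W = (M.subst (k+1) (lift j W)).subst j (V.subst k W) := by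
  induction M generalizing j k V W with
  | var n =>
    rcases Nat.lt_trichotomy n j with h1 | h1 | h1
    · simp [subst, if_neg (by omega : ¬ n = j), if_neg (by omega : ¬ j < n),
        if_neg (by omega : ¬ n = k), if_neg (by omega : ¬ k < n),
        if_neg (by omega : ¬ n = k+1), if_neg (by omega : ¬ k+1 < n)]
    · subst h1
      simp [subst, if_pos rfl, if_neg (by omega : ¬ n = k+1),
        if_neg (by omega : ¬ k+1 < n)]
    · rcases Nat.lt_trichotomy (n-1) k with h2 | h2 | h2
      · simp [subst, if_neg (by omega : ¬ n = j), if_pos h1,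
          if_neg (by omega : ¬ (n-1) = k), if_neg (by omega : ¬ k < n - 1),
          if_neg (by omega : ¬ n = k+1), if_neg (by omega : ¬ k+1 < n)]
      · have hn : n = k + 1 := by omega
        subst hn
        have L : ((var (k+1)).subst j V).subst k W = W := by
          simp [subst, if_neg (by omega : ¬ k+1 = j), if_pos h1, Nat.add_sub_cancel, if_pos h]
        have R : ((var (k+1)).subst (k+1) (lift j W)).subst j (V.subst k W) = W := by
          simp [subst, subst_lift]
        rw [L, R]
      · simp only [subst, if_neg (by omega : ¬ n = j), if_pos h1,
          if_neg (by omega : ¬ (n-1) = k), if_pos h2,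
          if_neg (by omega : ¬ n = k+1), if_pos (by omega : k+1 < n),
          if_neg (by omega : ¬ n - 1 = j), if_pos (by omega : j < n - 1)]
  | lam M ih =>
    simp only [subst]
    rw [ih (lift 0 V) (lift 0 W) (by omega : j+1 ≤ k+1),
      ← lift_lift W (Nat.zero_le j), ← lift_subst_le V W (Nat.zero_le k)]
  | app M M' ihM ihN => simp only [subst]; rw [ihM V W h, ihN V W h]
  | oplus M M' ihM ihN => simp only [subst]; rw [ihM V W h, ihN V W h]

end PTm
end Subst
section Par
open PTm

/-- Parallel βv-reduction (Tait–Martin-Löf style). -/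
inductive Par : PTm → PTm → Prop
  | var (n : ℕ) : Par (var n) (var n)
  | lam {M M'} : Par M M' → Par (lam M) (lam M')
  | app {M M' N N'} : Par M M' → Par N N' → Par (app M N) (app M' N')
  | oplus {M M' N N'} : Par M M' → Par N N' → Par (oplus M N) (oplus M' N')
  | beta {M M' V V'} : Par M M' → Par V V' → IsValue V →
      Par (app (lam M) V) (M'.subst 0 V')

theorem Par.refl (M : PTm) : Par M M := by
  induction M with
  | var n => exact Par.var n
  | lam M ih => exact Par.lam ih
  | app M N ihM ihN => exact Par.app ihM ihN
  | oplus M N ihM ihN => exact Par.oplus ihM ihN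

theorem parValue {V V' : PTm} (h : Par V V') (hv : IsValue V) : IsValue V' := by
  cases hv with
  | var n => cases h; exact IsValue.var _
  | lam M => cases h; exact IsValue.lam _

theorem liftValue {V : PTm} (d : ℕ) (hv : IsValue V) : IsValue (lift d V) := by
  cases hv with
  | var n => simp only [lift]; split_ifs <;> exact IsValue.var _
  | lam M => exact IsValue.lam _

theorem substValue {V W : PTm} (k : ℕ) (hv : IsValue V) (hw : IsValue W) :
    IsValue (V.subst k W) := by
  cases hv with
  | var n =>
    simp only [subst]; split_ifs <;> first | exact hw | exact IsValue.var _
  | lam M => exact IsValue.lam _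

theorem liftPar {M M' : PTm} (d : ℕ) (h : Par M M') : Par (lift d M) (lift d M') := by
  induction h generalizing d with
  | var n => simp only [lift]; split_ifs <;> exact Par.refl _
  | lam _ ih => exact Par.lam (ih (d+1))
  | app _ _ ihM ihN => exact Par.app (ihM d) (ihN d)
  | oplus _ _ ihM ihN => exact Par.oplus (ihM d) (ihN d)
  | @beta M M' V V' _ _ hv ihM ihV =>
    simp only [lift]
    rw [lift_subst_ge M' V' (Nat.zero_le d)]
    exact Par.beta (ihM (d+1)) (ihV d) (liftValue d hv)

theorem substPar {M M' : PTm} (h : Par M M') :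
    ∀ (k : ℕ) {W W' : PTm}, Par W W' → IsValue W →
      Par (M.subst k W) (M'.subst k W') := by
  induction h with
  | var n =>
    intro k W W' hw hwv
    simp only [subst]; split_ifs <;> first | exact hw | exact Par.refl _
  | lam _ ih =>
    intro k W W' hw hwv
    exact Par.lam (ih (k+1) (liftPar 0 hw) (liftValue 0 hwv))
  | app _ _ ihM ihN =>
    intro k W W' hw hwv
    exact Par.app (ihM k hw hwv) (ihN k hw hwv)
  | oplus _ _ ihM ihN =>
    intro k W W' hw hwv
    exact Par.oplus (ihM k hw hwv) (ihN k hw hwv)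
  | @beta M M' V V' _ _ hv ihM ihV =>
    intro k W W' hw hwv
    simp only [subst]
    rw [subst_subst M' V' W' (Nat.zero_le k)]
    exact Par.beta (ihM (k+1) (liftPar 0 hw) (liftValue 0 hwv))
      (ihV k hw hwv) (substValue k hv hwv)

theorem fullBv_par {M M' : PTm} (h : FullBv M M') : Par M M' := by
  induction h with
  | beta hv => exact Par.beta (Par.refl _) (Par.refl _) hv
  | lam _ ih => exact Par.lam ih
  | appL _ ih => exact Par.app ih (Par.refl _)
  | appR _ ih => exact Par.app (Par.refl _) ih
  | oplusL _ ih => exact Par.oplus ih (Par.refl _)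
  | oplusR _ ih => exact Par.oplus (Par.refl _) ih

theorem weakBv_fullBv {M M' : PTm} (h : WeakBv M M') : FullBv M M' := by
  induction h with
  | beta hv => exact FullBv.beta hv
  | appL _ ih => exact FullBv.appL ih
  | appR _ ih => exact FullBv.appR ih

theorem unbBv_fullBv {M M' : PTm} (h : UnbBv M M') : FullBv M M' := by
  induction h with
  | weak hw => exact weakBv_fullBv hw
  | lam _ _ ih => exact FullBv.lam ih
  | appL _ _ ih => exact FullBv.appL ih
  | appR _ _ ih => exact FullBv.appR ih
  | oplusL _ _ ih => exact FullBv.oplusL ih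
  | oplusR _ _ ih => exact FullBv.oplusR ih

/-- Decidable value test. -/
def PTm.isVal : PTm → Bool
  | PTm.var _ => true
  | PTm.lam _ => true
  | _ => false

theorem isVal_iff {M : PTm} : M.isVal = true ↔ IsValue M := by
  cases M <;> simp [PTm.isVal] <;> first
    | exact IsValue.var _ | exact IsValue.lam _
    | (intro h; cases h)

/-- Complete development (Takahashi function). -/
def cd : PTm → PTm
  | var n => var n
  | lam M => lam (cd M)
  | oplus M N => oplus (cd M) (cd N)
  | app (lam M) N => if N.isVal then (cd M).subst 0 (cd N) else app (lam (cd M)) (cd N)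
  | app (var n) N => app (var n) (cd N)
  | app (app M₁ M₂) N => app (cd (app M₁ M₂)) (cd N)
  | app (oplus M₁ M₂) N => app (cd (oplus M₁ M₂)) (cd N)

theorem cdValue {V : PTm} (hv : IsValue V) : IsValue (cd V) := by
  cases hv with
  | var n => exact IsValue.var _
  | lam M => exact IsValue.lam _

theorem par_cd {M N : PTm} (h : Par M N) : Par N (cd M) := by
  induction h with
  | var n => exact Par.var n
  | @lam M M' _ ih => exact Par.lam ih
  | @app M M' N N' hM hN ihM ihN =>
    match M, hM, ihM with
    | var n, hM, ihM =>
      cases hM; exact Par.app ihM ihN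
    | app M₁ M₂, hM, ihM =>
      cases hM <;> exact Par.app ihM ihN
    | oplus M₁ M₂, hM, ihM =>
      cases hM; exact Par.app ihM ihN
    | lam P, hP, ihP =>
      by_cases hval : N.isVal = true
      · have hvN : IsValue N := isVal_iff.mp hval
        cases hP with
        | lam hP' =>
          simp only [cd, if_pos hval]
          cases ihP with
          | lam ihP' => exact Par.beta ihP' ihN (parValue hN hvN)
      · have hvN : ¬ IsValue N := fun h => hval (isVal_iff.mpr h)
        simp only [cd, if_neg hval]
        exact Par.app ihP ihN
  | @oplus M M' N N' _ _ ihM ihN => exact Par.oplus ihM ihN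
  | @beta M M' V V' hM hV hv ihM ihV =>
    have hval : V.isVal = true := isVal_iff.mpr hv
    simp only [cd, if_pos hval]
    exact substPar ihM 0 ihV (parValue hV hv)

theorem parDiamond {M N₁ N₂ : PTm} (h1 : Par M N₁) (h2 : Par M N₂) :
    ∃ P, Par N₁ P ∧ Par N₂ P :=
  ⟨cd M, par_cd h1, par_cd h2⟩

abbrev Pars := Relation.ReflTransGen Par

theorem parStrip {M N₁ N₂ : PTm} (h1 : Par M N₁) (h2 : Pars M N₂) :
    ∃ P, Pars N₁ P ∧ Par N₂ P := by
  induction h2 with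
  | refl => exact ⟨N₁, Relation.ReflTransGen.refl, h1⟩
  | tail _ hstep ih =>
    obtain ⟨P, hP1, hP2⟩ := ih
    obtain ⟨Q, hQ1, hQ2⟩ := parDiamond hP2 hstep
    exact ⟨Q, hP1.tail hQ1, hQ2⟩

theorem parsConfluent {M N₁ N₂ : PTm} (h1 : Pars M N₁) (h2 : Pars M N₂) :
    ∃ P, Pars N₁ P ∧ Pars N₂ P := by
  induction h1 with
  | refl => exact ⟨N₂, h2, Relation.ReflTransGen.refl⟩
  | tail _ hstep ih =>
    obtain ⟨P, hP1, hP2⟩ := ih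
    obtain ⟨Q, hQ1, hQ2⟩ := parStrip hstep hP1
    exact ⟨Q, hQ1, hP2.tail hQ2⟩

end Par
section Internal
open PTm

/-- Internal parallel reduction: fires no redex at a weak position. -/
inductive ParI : PTm → PTm → Prop
  | var (n : ℕ) : ParI (var n) (var n)
  | lam {M M'} : Par M M' → ParI (lam M) (lam M')
  | app {M M' N N'} : ParI M M' → ParI N N' → ParI (app M N) (app M' N')
  | oplus {M M' N N'} : Par M M' → Par N N' → ParI (oplus M N) (oplus M' N')

theorem parI_par {M N : PTm} (h : ParI M N) : Par M N := by
  induction h with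
  | var n => exact Par.var n
  | lam h => exact Par.lam h
  | app _ _ ihM ihN => exact Par.app ihM ihN
  | oplus hM hN => exact Par.oplus hM hN

theorem parI_refl (M : PTm) : ParI M M := by
  induction M with
  | var n => exact ParI.var n
  | lam M ih => exact ParI.lam (Par.refl M)
  | app M N ihM ihN => exact ParI.app ihM ihN
  | oplus M N _ _ => exact ParI.oplus (Par.refl M) (Par.refl N)

theorem valuePar_parI {V V' : PTm} (h : Par V V') (hv : IsValue V) : ParI V V' := by
  cases hv with
  | var n => cases h; exact ParI.var n
  | lam M => cases h with | lam h => exact ParI.lam h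

theorem parIValueRev {X V : PTm} (h : ParI X V) (hv : IsValue V) : IsValue X := by
  cases hv with
  | var n => cases h; exact IsValue.var _
  | lam M => cases h; exact IsValue.lam _

theorem parIValueFwd {X V : PTm} (h : ParI X V) (hv : IsValue X) : IsValue V := by
  cases hv with
  | var n => cases h; exact IsValue.var _
  | lam M => cases h; exact IsValue.lam _

theorem substParI {M M' : PTm} (h : ParI M M') :
    ∀ (k : ℕ) {W W' : PTm}, Par W W' → IsValue W →
      ParI (M.subst k W) (M'.subst k W') := by
  induction h with
  | var n =>
    intro k W W' hw hwv
    simp only [subst]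
    split_ifs <;> first | exact valuePar_parI hw hwv | exact parI_refl _
  | lam h =>
    intro k W W' hw hwv
    exact ParI.lam (substPar h (k+1) (liftPar 0 hw) (liftValue 0 hwv))
  | app _ _ ihM ihN =>
    intro k W W' hw hwv
    exact ParI.app (ihM k hw hwv) (ihN k hw hwv)
  | oplus hM hN =>
    intro k W W' hw hwv
    exact ParI.oplus (substPar hM k hw hwv) (substPar hN k hw hwv)

abbrev WStar := Relation.ReflTransGen WeakBv

theorem wstar_appL {M M' N : PTm} (h : WStar M M') :
    WStar (app M N) (app M' N) :=
  Relation.ReflTransGen.lift (fun X => app X N) (fun _ _ hs => WeakBv.appL hs) _ _ h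

theorem wstar_appR {M N N' : PTm} (h : WStar N N') :
    WStar (app M N) (app M N') :=
  Relation.ReflTransGen.lift (fun X => app M X) (fun _ _ hs => WeakBv.appR hs) _ _ h

theorem wsubst {M M₁ : PTm} (h : WeakBv M M₁) (k : ℕ) {V : PTm} (hv : IsValue V) :
    WeakBv (M.subst k V) (M₁.subst k V) := by
  induction h generalizing k with
  | @beta P U hu =>
    have : (P.subst 0 U).subst k V
        = (P.subst (k+1) (lift 0 V)).subst 0 (U.subst k V) :=
      subst_subst P U V (Nat.zero_le k)
    rw [this]
    exact WeakBv.beta (substValue k hu hv)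
  | appL _ ih => exact WeakBv.appL (ih k)
  | appR _ ih => exact WeakBv.appR (ih k)

theorem wstar_subst {M M₁ : PTm} (h : WStar M M₁) (k : ℕ) {V : PTm}
    (hv : IsValue V) : WStar (M.subst k V) (M₁.subst k V) :=
  Relation.ReflTransGen.lift (fun (X : PTm) => X.subst k V) (fun _ _ hs => wsubst hs k hv) _ _ h

/-- Split: a parallel step factors as weak steps followed by an internal parallel step. -/
theorem parSplit {M N : PTm} (h : Par M N) : ∃ C, WStar M C ∧ ParI C N := by
  induction h with
  | var n => exact ⟨_, Relation.ReflTransGen.refl, ParI.var n⟩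
  | @lam M M' h _ => exact ⟨lam M, Relation.ReflTransGen.refl, ParI.lam h⟩
  | @app M M' N N' _ _ ihM ihN =>
    obtain ⟨C₁, hw1, hi1⟩ := ihM
    obtain ⟨C₂, hw2, hi2⟩ := ihN
    exact ⟨app C₁ C₂, (wstar_appL hw1).trans (wstar_appR hw2), ParI.app hi1 hi2⟩
  | @oplus M M' N N' hM hN _ _ =>
    exact ⟨oplus M N, Relation.ReflTransGen.refl, ParI.oplus hM hN⟩
  | @beta M M' V V' hM hV hv ihM _ =>
    obtain ⟨C₁, hw1, hi1⟩ := ihM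
    refine ⟨C₁.subst 0 V, Relation.ReflTransGen.head (WeakBv.beta hv) ?_,
      substParI hi1 0 hV hv⟩
    exact wstar_subst hw1 0 hv

/-- Swap: an internal parallel step followed by a weak step can be reorganized. -/
theorem parSwap {X Y Y' : PTm} (hi : ParI X Y) (hw : WeakBv Y Y') :
    ∃ X₁, WeakBv X X₁ ∧ Par X₁ Y' := by
  induction hw generalizing X with
  | @beta P V hv =>
    cases hi with
    | app h1 h2 =>
      cases h1 with
      | @lam P₀ _ hP =>
        exact ⟨P₀.subst 0 _, WeakBv.beta (parIValueRev h2 hv),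
          substPar hP 0 (parI_par h2) (parIValueRev h2 hv)⟩
  | @appL A A' B hstep ih =>
    cases hi with
    | app h1 h2 =>
      obtain ⟨X₁, hX₁, hpar⟩ := ih h1
      exact ⟨app X₁ _, WeakBv.appL hX₁, Par.app hpar (parI_par h2)⟩
  | @appR A B B' hstep ih =>
    cases hi with
    | app h1 h2 =>
      obtain ⟨X₁, hX₁, hpar⟩ := ih h2
      exact ⟨app _ X₁, WeakBv.appR hX₁, Par.app (parI_par h1) hpar⟩

theorem pushw {X Y Y' : PTm} (hp : Par X Y) (hw : WeakBv Y Y') :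
    ∃ X₁, WStar X X₁ ∧ Par X₁ Y' := by
  obtain ⟨C, hws, hi⟩ := parSplit hp
  obtain ⟨X₁, hX₁, hpar⟩ := parSwap hi hw
  exact ⟨X₁, hws.tail hX₁, hpar⟩

theorem pushwstar {X Y Z : PTm} (hp : Par X Y) (hw : WStar Y Z) :
    ∃ X', WStar X X' ∧ Par X' Z := by
  induction hw with
  | refl => exact ⟨X, Relation.ReflTransGen.refl, hp⟩
  | tail _ hstep ih =>
    obtain ⟨X', hX', hpar⟩ := ih
    obtain ⟨X'', hX'', hpar'⟩ := pushw hpar hstep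
    exact ⟨X'', hX'.trans hX'', hpar'⟩

abbrev ParIs := Relation.ReflTransGen ParI

/-- Factorization: parallel multi-steps factor into weak steps then internal steps. -/
theorem parsFactor {B A : PTm} (h : Pars B A) : ∃ C, WStar B C ∧ ParIs C A := by
  induction h using Relation.ReflTransGen.head_induction_on with
  | refl => exact ⟨A, Relation.ReflTransGen.refl, Relation.ReflTransGen.refl⟩
  | head hstep _ ih =>
    obtain ⟨D, hwD, hiD⟩ := ih
    obtain ⟨B₁, hB₁, hparD⟩ := pushwstar hstep hwD
    obtain ⟨C, hC, hiC⟩ := parSplit hparD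
    exact ⟨C, hB₁.trans hC, hiD.head hiC⟩

/-- ⊕-redexes persist forward along parallel reduction, with matching branches. -/
theorem opPar {A A₁ A₂ D : PTm} (ho : OplusRed A A₁ A₂) (hp : Par A D) :
    ∃ D₁ D₂, OplusRed D D₁ D₂ ∧ Par A₁ D₁ ∧ Par A₂ D₂ := by
  induction ho generalizing D with
  | root M N =>
    cases hp with
    | oplus h1 h2 => exact ⟨_, _, OplusRed.root _ _, h1, h2⟩
  | @appL P P₁ P₂ Q ho ih =>
    cases hp with
    | app h1 h2 =>
      obtain ⟨D₁, D₂, hD, hp1, hp2⟩ := ih h1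
      exact ⟨_, _, OplusRed.appL hD, Par.app hp1 h2, Par.app hp2 h2⟩
    | beta _ _ _ => cases ho
  | @appR P Q Q₁ Q₂ ho ih =>
    cases hp with
    | app h1 h2 =>
      obtain ⟨D₁, D₂, hD, hp1, hp2⟩ := ih h2
      exact ⟨_, _, OplusRed.appR hD, Par.app h1 hp1, Par.app h1 hp2⟩
    | @beta _ _ V _ _ _ hv => cases hv <;> cases ho

theorem opPars {A A₁ A₂ D : PTm} (ho : OplusRed A A₁ A₂) (hp : Pars A D) :
    ∃ D₁ D₂, OplusRed D D₁ D₂ ∧ Pars A₁ D₁ ∧ Pars A₂ D₂ := by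
  induction hp with
  | refl => exact ⟨A₁, A₂, ho, Relation.ReflTransGen.refl, Relation.ReflTransGen.refl⟩
  | tail _ hstep ih =>
    obtain ⟨D₁, D₂, hD, hp1, hp2⟩ := ih
    obtain ⟨E₁, E₂, hE, hq1, hq2⟩ := opPar hD hstep
    exact ⟨E₁, E₂, hE, hp1.tail hq1, hp2.tail hq2⟩

/-- ⊕-redexes reflect backward along internal parallel steps. -/
theorem opParI_rev {B A A₁ A₂ : PTm} (hi : ParI B A) (ho : OplusRed A A₁ A₂) :
    ∃ B₁ B₂, OplusRed B B₁ B₂ ∧ Par B₁ A₁ ∧ Par B₂ A₂ := by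
  induction ho generalizing B with
  | root M N =>
    cases hi with
    | oplus h1 h2 => exact ⟨_, _, OplusRed.root _ _, h1, h2⟩
  | @appL P P₁ P₂ Q ho ih =>
    cases hi with
    | app h1 h2 =>
      obtain ⟨B₁, B₂, hB, hp1, hp2⟩ := ih h1
      exact ⟨_, _, OplusRed.appL hB, Par.app hp1 (parI_par h2),
        Par.app hp2 (parI_par h2)⟩
  | @appR P Q Q₁ Q₂ ho ih =>
    cases hi with
    | app h1 h2 =>
      obtain ⟨B₁, B₂, hB, hp1, hp2⟩ := ih h2
      exact ⟨_, _, OplusRed.appR hB, Par.app (parI_par h1) hp1,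
        Par.app (parI_par h1) hp2⟩

theorem opParIs_rev {B A A₁ A₂ : PTm} (hi : ParIs B A) (ho : OplusRed A A₁ A₂) :
    ∃ B₁ B₂, OplusRed B B₁ B₂ ∧ Pars B₁ A₁ ∧ Pars B₂ A₂ := by
  induction hi using Relation.ReflTransGen.head_induction_on with
  | refl => exact ⟨A₁, A₂, ho, Relation.ReflTransGen.refl, Relation.ReflTransGen.refl⟩
  | head hstep _ ih =>
    obtain ⟨C₁, C₂, hC, hp1, hp2⟩ := ih
    obtain ⟨B₁, B₂, hB, hq1, hq2⟩ := opParI_rev hstep hC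
    exact ⟨B₁, B₂, hB, hp1.head hq1, hp2.head hq2⟩

/-- ⊕-redexes persist forward along internal parallel steps. -/
theorem opParI_fwd {B B₁ B₂ C : PTm} (ho : OplusRed B B₁ B₂) (hi : ParI B C) :
    ∃ C₁ C₂, OplusRed C C₁ C₂ ∧ Par B₁ C₁ ∧ Par B₂ C₂ := by
  induction ho generalizing C with
  | root M N =>
    cases hi with
    | oplus h1 h2 => exact ⟨_, _, OplusRed.root _ _, h1, h2⟩
  | @appL P P₁ P₂ Q ho ih =>
    cases hi with
    | app h1 h2 =>
      obtain ⟨C₁, C₂, hC, hp1, hp2⟩ := ih h1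
      exact ⟨_, _, OplusRed.appL hC, Par.app hp1 (parI_par h2),
        Par.app hp2 (parI_par h2)⟩
  | @appR P Q Q₁ Q₂ ho ih =>
    cases hi with
    | app h1 h2 =>
      obtain ⟨C₁, C₂, hC, hp1, hp2⟩ := ih h2
      exact ⟨_, _, OplusRed.appR hC, Par.app (parI_par h1) hp1,
        Par.app (parI_par h1) hp2⟩

/-- Extraction of a weak ⊕-redex through parallel multi-steps. -/
theorem opExtract {B A A₁ A₂ : PTm} (hp : Pars B A) (ho : OplusRed A A₁ A₂) :
    ∃ B₀ B₁ B₂, WStar B B₀ ∧ OplusRed B₀ B₁ B₂ ∧ Pars B₁ A₁ ∧ Pars B₂ A₂ := by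
  obtain ⟨C, hw, hi⟩ := parsFactor hp
  obtain ⟨B₁, B₂, hB, hp1, hp2⟩ := opParIs_rev hi ho
  exact ⟨C, B₁, B₂, hw, hB, hp1, hp2⟩

/-- `M` has no weak β-redex. -/
def WBn (M : PTm) : Prop := ∀ s, ¬ WeakBv M s

theorem wbn_app {M N : PTm} (h : WBn (app M N)) : WBn M ∧ WBn N :=
  ⟨fun s hs => h _ (WeakBv.appL hs), fun s hs => h _ (WeakBv.appR hs)⟩

theorem wbn_var (n : ℕ) : WBn (var n) := fun s hs => by cases hs
theorem wbn_lam (M : PTm) : WBn (lam M) := fun s hs => by cases hs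
theorem wbn_oplus (M N : PTm) : WBn (oplus M N) := fun s hs => by cases hs

theorem wbn_par_parI {B C : PTm} (h : Par B C) (hw : WBn B) : ParI B C := by
  induction h with
  | var n => exact ParI.var n
  | lam h => exact ParI.lam h
  | app h1 h2 ihM ihN =>
    exact ParI.app (ihM (wbn_app hw).1) (ihN (wbn_app hw).2)
  | oplus h1 h2 => exact ParI.oplus h1 h2
  | beta _ _ hv => exact absurd (WeakBv.beta hv) (hw _)

/-- Weak β-redexes reflect backward along internal parallel steps. -/
theorem weak_parI_rev {B C s : PTm} (hw : WeakBv C s) (hi : ParI B C) :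
    ∃ s', WeakBv B s' := by
  induction hw generalizing B with
  | @beta P V hv =>
    cases hi with
    | app h1 h2 =>
      cases h1 with
      | lam _ => exact ⟨_, WeakBv.beta (parIValueRev h2 hv)⟩
  | appL _ ih =>
    cases hi with
    | app h1 h2 => obtain ⟨s', hs'⟩ := ih h1; exact ⟨_, WeakBv.appL hs'⟩
  | appR _ ih =>
    cases hi with
    | app h1 h2 => obtain ⟨s', hs'⟩ := ih h2; exact ⟨_, WeakBv.appR hs'⟩

/-- Weak β-redexes persist forward along internal parallel steps. -/
theorem weak_parI_fwd {B C s : PTm} (hw : WeakBv B s) (hi : ParI B C) :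
    ∃ s', WeakBv C s' := by
  induction hw generalizing C with
  | @beta P V hv =>
    cases hi with
    | app h1 h2 =>
      cases h1 with
      | lam _ => exact ⟨_, WeakBv.beta (parIValueFwd h2 hv)⟩
  | appL _ ih =>
    cases hi with
    | app h1 h2 => obtain ⟨s', hs'⟩ := ih h1; exact ⟨_, WeakBv.appL hs'⟩
  | appR _ ih =>
    cases hi with
    | app h1 h2 => obtain ⟨s', hs'⟩ := ih h2; exact ⟨_, WeakBv.appR hs'⟩

theorem wbn_parI_rev {B C : PTm} (hi : ParI B C) (h : WBn C) : WBn B :=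
  fun s hs => by obtain ⟨s', hs'⟩ := weak_parI_fwd hs hi; exact h _ hs'

theorem wbn_parI_fwd {B C : PTm} (hi : ParI B C) (h : WBn B) : WBn C :=
  fun s hs => by obtain ⟨s', hs'⟩ := weak_parI_rev hs hi; exact h _ hs'

theorem wbn_pars_parIs {B C : PTm} (h : Pars B C) (hw : WBn B) :
    ParIs B C ∧ WBn C := by
  induction h with
  | refl => exact ⟨Relation.ReflTransGen.refl, hw⟩
  | tail _ hstep ih =>
    obtain ⟨his, hwn⟩ := ih
    have hi := wbn_par_parI hstep hwn
    exact ⟨his.tail hi, wbn_parI_fwd hi hwn⟩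

theorem opParIs_fwd {B B₁ B₂ C : PTm} (ho : OplusRed B B₁ B₂) (hi : ParIs B C) :
    ∃ C₁ C₂, OplusRed C C₁ C₂ ∧ Pars B₁ C₁ ∧ Pars B₂ C₂ := by
  induction hi with
  | refl => exact ⟨B₁, B₂, ho, Relation.ReflTransGen.refl, Relation.ReflTransGen.refl⟩
  | tail _ hstep ih =>
    obtain ⟨C₁, C₂, hC, hp1, hp2⟩ := ih
    obtain ⟨D₁, D₂, hD, hq1, hq2⟩ := opParI_fwd hC hstep
    exact ⟨D₁, D₂, hD, hp1.tail hq1, hp2.tail hq2⟩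

end Internal
section Strategy
open PTm

def NoBeta (M : PTm) : Prop := ∀ M', ¬ FullBv M M'
def WOn (M : PTm) : Prop := ∀ a b, ¬ OplusRed M a b

theorem sstep_step {M : PTm} {d : MDist} (h : SStep M d) : Step M d := by
  cases h with
  | bv h => exact Step.bv (weakBv_fullBv h)
  | oplus h => exact Step.oplus h

theorem estep_step {M : PTm} {d : MDist} (h : EStep M d) : Step M d := by
  cases h with
  | surf _ h => exact sstep_step h
  | unb _ h => exact Step.bv (unbBv_fullBv h)

theorem tmNormal_iff {M : PTm} : TmNormal M ↔ NoBeta M ∧ WOn M := by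
  constructor
  · intro h
    exact ⟨fun M' hM' => h _ (Step.bv hM'), fun a b hab => h _ (Step.oplus hab)⟩
  · rintro ⟨h1, h2⟩ d hd
    cases hd with
    | bv h => exact h1 _ h
    | oplus h => exact h2 _ _ h

theorem surfNormal_iff {M : PTm} : SurfNormal M ↔ WBn M ∧ WOn M := by
  constructor
  · intro h
    exact ⟨fun s hs => h _ (SStep.bv hs), fun a b hab => h _ (SStep.oplus hab)⟩
  · rintro ⟨h1, h2⟩ d hd
    cases hd with
    | bv h => exact h1 _ h
    | oplus h => exact h2 _ _ h

theorem not_surfNormal_of_weak {M s : PTm} (h : WeakBv M s) : ¬ SurfNormal M :=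
  fun hn => hn _ (SStep.bv h)

theorem not_surfNormal_of_oplus {M a b : PTm} (h : OplusRed M a b) : ¬ SurfNormal M :=
  fun hn => hn _ (SStep.oplus h)

theorem noBeta_lam {M : PTm} (h : NoBeta (lam M)) : NoBeta M :=
  fun M' hM' => h _ (FullBv.lam hM')

theorem noBeta_app {M N : PTm} (h : NoBeta (app M N)) : NoBeta M ∧ NoBeta N :=
  ⟨fun M' hM' => h _ (FullBv.appL hM'), fun N' hN' => h _ (FullBv.appR hN')⟩

theorem noBeta_oplus {M N : PTm} (h : NoBeta (oplus M N)) : NoBeta M ∧ NoBeta N :=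
  ⟨fun M' hM' => h _ (FullBv.oplusL hM'), fun N' hN' => h _ (FullBv.oplusR hN')⟩

theorem noBeta_wbn {M : PTm} (h : NoBeta M) : WBn M :=
  fun s hs => h _ (weakBv_fullBv hs)

theorem parNF {A A' : PTm} (h : Par A A') (hn : NoBeta A) : A' = A := by
  induction h with
  | var n => rfl
  | lam _ ih => rw [ih (noBeta_lam hn)]
  | app _ _ ihM ihN => rw [ihM (noBeta_app hn).1, ihN (noBeta_app hn).2]
  | oplus _ _ ihM ihN => rw [ihM (noBeta_oplus hn).1, ihN (noBeta_oplus hn).2]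
  | beta _ _ hv => exact absurd (FullBv.beta hv) (hn _)

theorem parsNF {A A' : PTm} (h : Pars A A') (hn : NoBeta A) : A' = A := by
  induction h with
  | refl => rfl
  | tail _ hstep ih => rw [ih] at hstep; exact parNF hstep hn

theorem fullBv_unbBv_ex {M M' : PTm} (h : FullBv M M') : ∃ M'', UnbBv M M'' := by
  induction h with
  | @beta P V hv => exact ⟨_, UnbBv.weak (WeakBv.beta hv)⟩
  | @lam P P' _ ih =>
    obtain ⟨M'', hM''⟩ := ih
    exact ⟨_, UnbBv.lam (fun s hs => by cases hs) hM''⟩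
  | @appL P P' Q _ ih =>
    by_cases hw : ∃ s, WeakBv (app P Q) s
    · obtain ⟨s, hs⟩ := hw; exact ⟨s, UnbBv.weak hs⟩
    · obtain ⟨M'', hM''⟩ := ih
      exact ⟨_, UnbBv.appL (fun s hs => hw ⟨s, hs⟩) hM''⟩
  | @appR P Q Q' _ ih =>
    by_cases hw : ∃ s, WeakBv (app P Q) s
    · obtain ⟨s, hs⟩ := hw; exact ⟨s, UnbBv.weak hs⟩
    · obtain ⟨M'', hM''⟩ := ih
      exact ⟨_, UnbBv.appR (fun s hs => hw ⟨s, hs⟩) hM''⟩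
  | @oplusL P P' Q _ ih =>
    obtain ⟨M'', hM''⟩ := ih
    exact ⟨_, UnbBv.oplusL (fun s hs => by cases hs) hM''⟩
  | @oplusR P Q Q' _ ih =>
    obtain ⟨M'', hM''⟩ := ih
    exact ⟨_, UnbBv.oplusR (fun s hs => by cases hs) hM''⟩

theorem estep_total {M : PTm} (h : ¬ TmNormal M) : ∃ d, EStep M d := by
  have : ∃ d, Step M d := by
    by_contra hc
    push_neg at hc
    exact h (fun d hd => hc d hd)
  obtain ⟨d, hd⟩ := this
  by_cases hs : SurfNormal M
  · cases hd with
    | bv hbv =>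
      obtain ⟨M'', hM''⟩ := fullBv_unbBv_ex hbv
      exact ⟨_, EStep.unb hs hM''⟩
    | oplus ho => exact absurd (SStep.oplus ho) (hs _)
  · have : ∃ e, SStep M e := by
      by_contra hc
      push_neg at hc
      exact hs (fun e he => hc e he)
    obtain ⟨e, he⟩ := this
    exact ⟨e, EStep.surf hs he⟩

theorem tmNormal_no_estep {M : PTm} (h : TmNormal M) {d : MDist} : ¬ EStep M d :=
  fun he => h _ (estep_step he)

/-- Head constructor tag. -/
def hd : PTm → ℕ
  | var _ => 0
  | lam _ => 1
  | app _ _ => 2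
  | oplus _ _ => 3

theorem hd_lam_iff {P : PTm} : hd P = 1 ↔ ∃ B, P = lam B := by
  cases P <;> simp [hd]

theorem isValue_iff_hd {P : PTm} : IsValue P ↔ hd P ≤ 1 := by
  cases P <;> simp [hd] <;> first
    | exact IsValue.var _ | exact IsValue.lam _ | (intro h; cases h)

/-- The unbiased strategy preserves head constructor and weak β-normality. -/
theorem unbBv_wbn {R R' : PTm} (h : UnbBv R R') (hw : WBn R) :
    hd R' = hd R ∧ WBn R' := by
  induction h with
  | weak hs => exact absurd hs (hw _)
  | lam _ _ _ => exact ⟨rfl, wbn_lam _⟩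
  | @appL P P' Q hpre h ih =>
    obtain ⟨hhd, hwP'⟩ := ih (wbn_app hw).1
    refine ⟨rfl, fun s hs => ?_⟩
    cases hs with
    | @beta M V hv =>
      obtain ⟨B, hB⟩ := hd_lam_iff.mp (by rw [← hhd]; rfl)
      subst hB
      exact hw _ (WeakBv.beta hv)
    | appL hs => exact hwP' _ hs
    | appR hs => exact (wbn_app hw).2 _ hs
  | @appR P Q Q' hpre h ih =>
    obtain ⟨hhd, hwQ'⟩ := ih (wbn_app hw).2
    refine ⟨rfl, fun s hs => ?_⟩
    cases hs with
    | @beta M V hv =>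
      have : IsValue Q := isValue_iff_hd.mpr (by rw [← hhd]; exact isValue_iff_hd.mp hv)
      exact hw _ (WeakBv.beta this)
    | appL hs => exact (wbn_app hw).1 _ hs
    | appR hs => exact hwQ' _ hs
  | oplusL _ _ _ => exact ⟨rfl, wbn_oplus _ _⟩
  | oplusR _ _ _ => exact ⟨rfl, wbn_oplus _ _⟩

theorem unbBv_won {R R' : PTm} (h : UnbBv R R') (hw : WBn R) (ho : WOn R) :
    WOn R' := by
  induction h with
  | weak hs => exact absurd hs (hw _)
  | lam _ _ _ => exact fun a b hab => by cases hab
  | @appL P P' Q hpre h ih =>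
    intro a b hab
    cases hab with
    | appL hab =>
      exact ih (wbn_app hw).1 (fun a b hab => ho _ _ (OplusRed.appL hab)) _ _ hab
    | appR hab => exact ho _ _ (OplusRed.appR hab)
  | @appR P Q Q' hpre h ih =>
    intro a b hab
    cases hab with
    | appL hab => exact ho _ _ (OplusRed.appL hab)
    | appR hab =>
      exact ih (wbn_app hw).2 (fun a b hab => ho _ _ (OplusRed.appR hab)) _ _ hab
  | oplusL _ _ _ => exact absurd (OplusRed.root _ _) (ho _ _)
  | oplusR _ _ _ => exact absurd (OplusRed.root _ _) (ho _ _)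

theorem unbBv_surfNormal {R R' : PTm} (h : UnbBv R R') (hs : SurfNormal R) :
    SurfNormal R' := by
  obtain ⟨h1, h2⟩ := surfNormal_iff.mp hs
  exact surfNormal_iff.mpr ⟨(unbBv_wbn h h1).2, unbBv_won h h1 h2⟩

abbrev UnbStar := Relation.ReflTransGen UnbBv

theorem unbStar_lam {P Q : PTm} (h : UnbStar P Q) : UnbStar (lam P) (lam Q) :=
  Relation.ReflTransGen.lift lam
    (fun _ _ hs => UnbBv.lam (fun s hs' => by cases hs') hs) _ _ h

theorem unbStar_oplusL {P Q S : PTm} (h : UnbStar P Q) :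
    UnbStar (oplus P S) (oplus Q S) :=
  Relation.ReflTransGen.lift (fun X => oplus X S)
    (fun _ _ hs => UnbBv.oplusL (fun s hs' => by cases hs') hs) _ _ h

theorem unbStar_oplusR {P Q S : PTm} (h : UnbStar P Q) :
    UnbStar (oplus S P) (oplus S Q) :=
  Relation.ReflTransGen.lift (fun X => oplus S X)
    (fun _ _ hs => UnbBv.oplusR (fun s hs' => by cases hs') hs) _ _ h

theorem unbStar_appL {R R' S : PTm} (h : UnbStar R R') (hw : WBn (app R S)) :
    hd R' = hd R ∧ WBn (app R' S) ∧ UnbStar (app R S) (app R' S) := by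
  induction h with
  | refl => exact ⟨rfl, hw, Relation.ReflTransGen.refl⟩
  | @tail R₁ R₂ _ hstep ih =>
    obtain ⟨hhd, hw₁, hchain⟩ := ih
    obtain ⟨hhd₂, hwR₂⟩ := unbBv_wbn hstep (wbn_app hw₁).1
    refine ⟨hhd₂.trans hhd, fun s hs => ?_, hchain.tail (UnbBv.appL hw₁ hstep)⟩
    cases hs with
    | @beta M V hv =>
      have hR1 : hd R = 1 := by rw [← hhd, ← hhd₂]; rfl
      obtain ⟨B, hB⟩ := hd_lam_iff.mp hR1
      subst hB
      exact hw _ (WeakBv.beta hv)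
    | appL hs => exact hwR₂ _ hs
    | appR hs => exact (wbn_app hw).2 _ hs

theorem unbStar_appR {R S S' : PTm} (h : UnbStar S S') (hw : WBn (app R S)) :
    hd S' = hd S ∧ WBn (app R S') ∧ UnbStar (app R S) (app R S') := by
  induction h with
  | refl => exact ⟨rfl, hw, Relation.ReflTransGen.refl⟩
  | @tail S₁ S₂ _ hstep ih =>
    obtain ⟨hhd, hw₁, hchain⟩ := ih
    obtain ⟨hhd₂, hwS₂⟩ := unbBv_wbn hstep (wbn_app hw₁).2
    refine ⟨hhd₂.trans hhd, fun s hs => ?_, hchain.tail (UnbBv.appR hw₁ hstep)⟩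
    cases hs with
    | @beta M V hv =>
      have : IsValue S := isValue_iff_hd.mpr
        (by rw [← (hhd₂.trans hhd)]; exact isValue_iff_hd.mp hv)
      exact hw _ (WeakBv.beta this)
    | appL hs => exact (wbn_app hw).1 _ hs
    | appR hs => exact hwS₂ _ hs
end Strategy
section DeepNF
open PTm

theorem parIs_pars {M N : PTm} (h : ParIs M N) : Pars M N := by
  induction h with
  | refl => exact Relation.ReflTransGen.refl
  | tail _ hstep ih => exact ih.tail (parI_par hstep)

theorem parIs_var {n : ℕ} {Q : PTm} (h : ParIs (var n) Q) : Q = var n := by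
  induction h with
  | refl => rfl
  | tail _ hstep ih => subst ih; cases hstep; rfl

theorem parIs_lam {R Q : PTm} (h : ParIs (lam R) Q) :
    ∃ R', Q = lam R' ∧ Pars R R' := by
  induction h with
  | refl => exact ⟨R, rfl, Relation.ReflTransGen.refl⟩
  | tail _ hstep ih =>
    obtain ⟨R', rfl, hR⟩ := ih
    cases hstep with
    | lam h => exact ⟨_, rfl, hR.tail h⟩

theorem parIs_app {R S Q : PTm} (h : ParIs (app R S) Q) :
    ∃ R' S', Q = app R' S' ∧ ParIs R R' ∧ ParIs S S' := by
  induction h with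
  | refl => exact ⟨R, S, rfl, Relation.ReflTransGen.refl, Relation.ReflTransGen.refl⟩
  | tail _ hstep ih =>
    obtain ⟨R', S', rfl, hR, hS⟩ := ih
    cases hstep with
    | app h1 h2 => exact ⟨_, _, rfl, hR.tail h1, hS.tail h2⟩

theorem parIs_oplus {R S Q : PTm} (h : ParIs (oplus R S) Q) :
    ∃ R' S', Q = oplus R' S' ∧ Pars R R' ∧ Pars S S' := by
  induction h with
  | refl => exact ⟨R, S, rfl, Relation.ReflTransGen.refl, Relation.ReflTransGen.refl⟩
  | tail _ hstep ih =>
    obtain ⟨R', S', rfl, hR, hS⟩ := ih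
    cases hstep with
    | oplus h1 h2 => exact ⟨_, _, rfl, hR.tail h1, hS.tail h2⟩

theorem weak_parIs_fwd {B C s : PTm} (hw : WeakBv B s) (hi : ParIs B C) :
    ∃ s', WeakBv C s' := by
  induction hi with
  | refl => exact ⟨s, hw⟩
  | tail _ hstep ih =>
    obtain ⟨s', hs'⟩ := ih
    exact weak_parI_fwd hs' hstep

theorem wstar_unbStar {M N : PTm} (h : WStar M N) : UnbStar M N :=
  Relation.ReflTransGen.lift id (fun _ _ hs => UnbBv.weak hs) _ _ h

/-- Deep normalization: if `P` parallel-reduces to a β-normal form `Q`, the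
unbiased strategy reaches `Q` from `P`. -/
theorem unbNF : ∀ (n : ℕ) (P Q : PTm), sizeOf Q ≤ n → Pars P Q → NoBeta Q →
    UnbStar P Q := by
  intro n
  induction n with
  | zero => intro P Q hs; cases Q <;> simp at hs
  | succ n ih =>
    intro P Q hs hp hnb
    obtain ⟨P₁, hw, his⟩ := parsFactor hp
    have hwbn : WBn P₁ := by
      intro s hs'
      obtain ⟨s', hs''⟩ := weak_parIs_fwd hs' his
      exact hnb _ (weakBv_fullBv hs'')
    refine (wstar_unbStar hw).trans ?_
    cases P₁ with
    | var m => rw [parIs_var his]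
    | lam R =>
      obtain ⟨R', rfl, hR⟩ := parIs_lam his
      have : sizeOf R' ≤ n := by
        have := hs; simp at this; omega
      exact unbStar_lam (ih R R' this hR (noBeta_lam hnb))
    | oplus R S =>
      obtain ⟨R', S', rfl, hR, hS⟩ := parIs_oplus his
      have h1 : sizeOf R' ≤ n := by have := hs; simp at this; omega
      have h2 : sizeOf S' ≤ n := by have := hs; simp at this; omega
      exact (unbStar_oplusL (ih R R' h1 hR (noBeta_oplus hnb).1)).trans
        (unbStar_oplusR (ih S S' h2 hS (noBeta_oplus hnb).2))
    | app R S =>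
      obtain ⟨R', S', rfl, hR, hS⟩ := parIs_app his
      have h1 : sizeOf R' ≤ n := by have := hs; simp at this; omega
      have h2 : sizeOf S' ≤ n := by have := hs; simp at this; omega
      have uR : UnbStar R R' := ih R R' h1 (parIs_pars hR) (noBeta_app hnb).1
      have uS : UnbStar S S' := ih S S' h2 (parIs_pars hS) (noBeta_app hnb).2
      obtain ⟨_, hw2, hc1⟩ := unbStar_appL uR hwbn
      obtain ⟨_, _, hc2⟩ := unbStar_appR uS hw2
      exact hc1.trans hc2

/-- Single unbiased evaluation step producing a Dirac distribution. -/
def ERed (X Y : PTm) : Prop := EStep X (single Y)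
abbrev EStar := Relation.ReflTransGen ERed

theorem weak_ered {X Y : PTm} (h : WeakBv X Y) : ERed X Y :=
  EStep.surf (not_surfNormal_of_weak h) (SStep.bv h)

/-- Unbiased steps from a surface-normal term are `E`-steps. -/
theorem unbStar_estar {X A : PTm} (h : UnbStar X A) : SurfNormal X → EStar X A := by
  induction h using Relation.ReflTransGen.head_induction_on with
  | refl => intro _; exact Relation.ReflTransGen.refl
  | head hstep _ ih =>
    intro hsn
    exact Relation.ReflTransGen.head (EStep.unb hsn hstep)
      (ih (unbBv_surfNormal hstep hsn))

/-- If `B` parallel-reduces to a normal form `A`, unbiased evaluation reaches `A`. -/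
theorem parsNormalE {B A : PTm} (hp : Pars B A) (hn : TmNormal A) : EStar B A := by
  obtain ⟨hnb, hwo⟩ := tmNormal_iff.mp hn
  obtain ⟨P₁, hw, his⟩ := parsFactor hp
  have hwbn : WBn P₁ := by
    intro s hs'
    obtain ⟨s', hs''⟩ := weak_parIs_fwd hs' his
    exact hnb _ (weakBv_fullBv hs'')
  have hwon : WOn P₁ := by
    intro a b hab
    obtain ⟨C₁, C₂, hC, _, _⟩ := opParIs_fwd hab his
    exact hwo _ _ hC
  have hsn : SurfNormal P₁ := surfNormal_iff.mpr ⟨hwbn, hwon⟩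
  have hu : UnbStar P₁ A := unbNF (sizeOf A) P₁ A le_rfl (parIs_pars his) hnb
  exact (Relation.ReflTransGen.lift id (fun _ _ hs => weak_ered hs) _ _ hw).trans
    (unbStar_estar hu hsn)
end DeepNF
section OpComm
open PTm

theorem opComm {A K₁ K₂ S₁ S₂ : PTm} (h1 : OplusRed A K₁ K₂)
    (h2 : OplusRed A S₁ S₂) :
    (K₁ = S₁ ∧ K₂ = S₂) ∨
    ∃ E₁₁ E₁₂ E₂₁ E₂₂, OplusRed K₁ E₁₁ E₁₂ ∧ OplusRed K₂ E₂₁ E₂₂ ∧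
      OplusRed S₁ E₁₁ E₂₁ ∧ OplusRed S₂ E₁₂ E₂₂ := by
  induction h1 generalizing S₁ S₂ with
  | root M N => cases h2 with
    | root => exact Or.inl ⟨rfl, rfl⟩
  | @appL P P₁ P₂ Q h ih =>
    cases h2 with
    | appL h' =>
      rcases ih h' with ⟨rfl, rfl⟩ | ⟨E₁₁, E₁₂, E₂₁, E₂₂, a1, a2, a3, a4⟩
      · exact Or.inl ⟨rfl, rfl⟩
      · exact Or.inr ⟨_, _, _, _, OplusRed.appL a1, OplusRed.appL a2,
          OplusRed.appL a3, OplusRed.appL a4⟩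
    | @appR _ _ Q₁ Q₂ h' =>
      exact Or.inr ⟨app P₁ Q₁, app P₁ Q₂, app P₂ Q₁, app P₂ Q₂,
        OplusRed.appR h', OplusRed.appR h', OplusRed.appL h, OplusRed.appL h⟩
  | @appR P Q Q₁ Q₂ h ih =>
    cases h2 with
    | appR h' =>
      rcases ih h' with ⟨rfl, rfl⟩ | ⟨E₁₁, E₁₂, E₂₁, E₂₂, a1, a2, a3, a4⟩
      · exact Or.inl ⟨rfl, rfl⟩
      · exact Or.inr ⟨_, _, _, _, OplusRed.appR a1, OplusRed.appR a2,
          OplusRed.appR a3, OplusRed.appR a4⟩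
    | @appL _ P₁ P₂ _ h' =>
      exact Or.inr ⟨app P₁ Q₁, app P₂ Q₁, app P₁ Q₂, app P₂ Q₂,
        OplusRed.appL h', OplusRed.appL h', OplusRed.appR h, OplusRed.appR h⟩
end OpComm

section Algebra
open PTm

def massOf (c : MDist) : NNReal := (c.map Prod.fst).sum

@[simp] theorem scale_zero (p : NNReal) : scale p (0 : MDist) = 0 := rfl

@[simp] theorem scale_cons (p q : NNReal) (M : PTm) (c : MDist) :
    scale p ((q, M) ::ₘ c) = (p * q, M) ::ₘ scale p c := by
  simp [scale]

@[simp] theorem scale_add (p : NNReal) (a b : MDist) :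
    scale p (a + b) = scale p a + scale p b := by
  simp [scale]

theorem scale_scale (p q : NNReal) (c : MDist) :
    scale p (scale q c) = scale (p * q) c := by
  simp [scale, Multiset.map_map]
  congr 1
  funext x
  simp [mul_assoc]

@[simp] theorem scale_one (c : MDist) : scale 1 c = c := by
  simp [scale]

theorem single_eq (M : PTm) : single M = ((1 : NNReal), M) ::ₘ 0 := rfl

@[simp] theorem scale_single (p : NNReal) (M : PTm) :
    scale p (single M) = ({(p, M)} : MDist) := by
  simp [single, scale]

@[simp] theorem massOf_zero : massOf (0 : MDist) = 0 := rfl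

@[simp] theorem massOf_cons (p : NNReal) (M : PTm) (c : MDist) :
    massOf ((p, M) ::ₘ c) = p + massOf c := by
  simp [massOf]

@[simp] theorem massOf_add (a b : MDist) : massOf (a + b) = massOf a + massOf b := by
  simp [massOf]

@[simp] theorem massOf_singleton (p : NNReal) (M : PTm) :
    massOf ({(p, M)} : MDist) = p := by simp [massOf]

@[simp] theorem massOf_scale (p : NNReal) (c : MDist) :
    massOf (scale p c) = p * massOf c := by
  induction c using Multiset.induction with
  | empty => simp
  | cons a s ih =>
    obtain ⟨q, M⟩ := a
    simp [ih, mul_add]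

theorem step_mass {M : PTm} {d : MDist} (h : Step M d) : massOf d = 1 := by
  cases h with
  | bv _ => simp [single]
  | oplus _ =>
    rw [show ({((1:NNReal)/2, _), ((1:NNReal)/2, _)} : MDist)
      = ((1:NNReal)/2, _) ::ₘ {((1:NNReal)/2, _)} from rfl]
    rw [massOf_cons, massOf_singleton, one_div, ← two_mul]
    exact mul_inv_cancel₀ two_ne_zero

theorem estep_mass {M : PTm} {d : MDist} (h : EStep M d) : massOf d = 1 :=
  step_mass (estep_step h)

theorem fullLift_mass {c c' : MDist} (h : FullLift EStep c c') :
    massOf c' = massOf c := by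
  induction h with
  | zero => rfl
  | keep _ _ ih => simp [ih]
  | step hr _ ih => simp [ih, estep_mass hr]

theorem fullLift_add {r} {a a' b b' : MDist} (ha : FullLift r a a')
    (hb : FullLift r b b') : FullLift r (a + b) (a' + b') := by
  induction ha with
  | zero => simpa using hb
  | @keep p M m n hn _ ih =>
    rw [Multiset.cons_add, Multiset.cons_add]
    exact FullLift.keep hn ih
  | @step p M d m n hr _ ih =>
    rw [Multiset.cons_add, add_assoc]
    exact FullLift.step hr ih

theorem fullLift_scale {r} {a a' : MDist} (q : NNReal) (h : FullLift r a a') :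
    FullLift r (scale q a) (scale q a') := by
  induction h with
  | zero => exact FullLift.zero
  | @keep p M m n hn _ ih =>
    rw [scale_cons, scale_cons]
    exact FullLift.keep hn ih
  | @step p M d m n hr _ ih =>
    rw [scale_cons, scale_add, scale_scale]
    exact FullLift.step hr ih

theorem fullLift_refl {r} {c : MDist} (h : ∀ x ∈ c, TmNormal x.2) :
    FullLift r c c := by
  induction c using Multiset.induction with
  | empty => exact FullLift.zero
  | @cons a s ih =>
    obtain ⟨p, M⟩ := a
    exact FullLift.keep (h _ (Multiset.mem_cons_self _ _))
      (ih fun x hx => h x (Multiset.mem_cons_of_mem hx))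

theorem fullLift_total (c : MDist) : ∃ c', FullLift EStep c c' := by
  induction c using Multiset.induction with
  | empty => exact ⟨0, FullLift.zero⟩
  | @cons a s ih =>
    obtain ⟨c', hc'⟩ := ih
    obtain ⟨p, M⟩ := a
    by_cases hn : TmNormal M
    · exact ⟨_, FullLift.keep hn hc'⟩
    · obtain ⟨d, hd⟩ := estep_total hn
      exact ⟨_, FullLift.step hd hc'⟩

open Classical in
theorem obsN_def (c : MDist) (N : PTm) :
    obsN c N = if TmNormal N then ((c.filter fun q => q.2 = N).map Prod.fst).sum
      else 0 := rfl

theorem obsN_zero (N : PTm) : obsN (0 : MDist) N = 0 := by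
  rw [obsN_def]; split_ifs <;> simp

open Classical in
theorem obsN_cons (p : NNReal) (M : PTm) (c : MDist) (N : PTm) :
    obsN ((p, M) ::ₘ c) N
      = (if TmNormal N ∧ M = N then p else 0) + obsN c N := by
  rw [obsN_def, obsN_def]
  by_cases h : TmNormal N
  · simp only [if_pos h, Multiset.filter_cons]
    by_cases hm : M = N
    · simp [hm, h]
    · simp [hm, h]
  · simp [h]

theorem obsN_add (a b : MDist) (N : PTm) : obsN (a + b) N = obsN a N + obsN b N := by
  induction a using Multiset.induction with
  | empty => simp [obsN_zero]
  | cons x s ih =>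
    obtain ⟨q, M⟩ := x
    rw [Multiset.cons_add, obsN_cons, obsN_cons, ih, add_assoc]

theorem obsN_scale (p : NNReal) (a : MDist) (N : PTm) :
    obsN (scale p a) N = p * obsN a N := by
  induction a using Multiset.induction with
  | empty => simp [obsN_zero]
  | cons x s ih =>
    obtain ⟨q, M⟩ := x
    rw [scale_cons, obsN_cons, obsN_cons, ih, mul_add]
    congr 1
    split_ifs <;> simp

theorem obsN_le_mass (c : MDist) (N : PTm) : obsN c N ≤ massOf c := by
  classical
  induction c using Multiset.induction with
  | empty => simp [obsN_zero]
  | cons x s ih =>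
    obtain ⟨q, M⟩ := x
    rw [obsN_cons, massOf_cons]
    refine add_le_add ?_ ih
    split_ifs <;> simp

theorem fullLift_obs_le {c c' : MDist} (h : FullLift EStep c c') (N : PTm) :
    obsN c N ≤ obsN c' N := by
  classical
  induction h with
  | zero => exact le_rfl
  | @keep p M m n hn _ ih =>
    rw [obsN_cons, obsN_cons]
    exact add_le_add le_rfl ih
  | @step p M d m n hr _ ih =>
    rw [obsN_cons, obsN_add]
    have h0 : (if TmNormal N ∧ M = N then p else 0) = 0 := by
      split_ifs with hc
      · have hM : TmNormal M := by rw [hc.2]; exact hc.1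
        exact absurd hr (tmNormal_no_estep hM)
      · rfl
    rw [h0, zero_add]
    exact le_add_of_nonneg_of_le zero_le ih
end Algebra
section GRelSec
open PTm

abbrev FL := FullLift EStep

/-- Thread invariant: the multi-distribution `c` tracks the `f`-side thread term `A`. -/
inductive GRel : PTm → MDist → Prop
  | leaf {B A} : Pars B A → GRel A (single B)
  | padv {A A' c} : Par A A' → GRel A' c → GRel A c
  | split {A A₁ A₂ c₁ c₂} : OplusRed A A₁ A₂ → GRel A₁ c₁ → GRel A₂ c₂ →
      GRel A (scale (1/2) c₁ + scale (1/2) c₂)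

theorem half_add_half : (1 : NNReal)/2 + 1/2 = 1 := by
  rw [one_div, ← two_mul]
  exact mul_inv_cancel₀ two_ne_zero

theorem grel_mass {A : PTm} {c : MDist} (h : GRel A c) : massOf c = 1 := by
  induction h with
  | leaf _ => simp [single]
  | padv _ _ ih => exact ih
  | split _ _ _ ih1 ih2 =>
    rw [massOf_add, massOf_scale, massOf_scale, ih1, ih2, mul_one, half_add_half]

theorem grel_push {A A' : PTm} {c : MDist} (h : GRel A c) (hp : Par A A') :
    GRel A' c := by
  induction h generalizing A' with
  | leaf hB => exact GRel.leaf (hB.tail hp)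
  | @padv A X c hAX _ ih =>
    obtain ⟨Z, h1, h2⟩ := parDiamond hAX hp
    exact GRel.padv h2 (ih h1)
  | split ho h1 h2 ih1 ih2 =>
    obtain ⟨D₁, D₂, hD, hp1, hp2⟩ := opPar ho hp
    exact GRel.split hD (ih1 hp1) (ih2 hp2)

theorem grel_pushs {A A' : PTm} {c : MDist} (h : GRel A c) (hp : Pars A A') :
    GRel A' c := by
  induction hp with
  | refl => exact h
  | tail _ hstep ih => exact grel_push ih hstep

theorem fl_single {B : PTm} {d : MDist} (h : EStep B d) : FL (single B) d := by
  have h2 : FullLift EStep (((1:NNReal), B) ::ₘ 0) (scale 1 d + 0) :=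
    FullLift.step h FullLift.zero
  simpa [single] using h2

theorem estar_fl {X Y : PTm} (h : EStar X Y) :
    Relation.ReflTransGen FL (single X) (single Y) :=
  Relation.ReflTransGen.lift single (fun _ _ hs => fl_single hs) _ _ h

theorem pair_split (B₁ B₂ : PTm) :
    ({((1:NNReal)/2, B₁), ((1:NNReal)/2, B₂)} : MDist)
      = scale (1/2) (single B₁) + scale (1/2) (single B₂) := by
  rw [scale_single, scale_single]
  exact (Multiset.singleton_add _ _).symm

/-- Forced one-round progress preserving the thread invariant. -/
theorem grel_forced {A : PTm} {c : MDist} (h : GRel A c) :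
    ∃ c', FL c c' ∧ GRel A c' := by
  induction h with
  | @leaf B A hBA =>
    by_cases hn : TmNormal B
    · refine ⟨single B, fullLift_refl ?_, GRel.leaf hBA⟩
      intro x hx
      rw [single, Multiset.mem_singleton] at hx
      subst hx
      exact hn
    · by_cases hwk : ∃ s, WeakBv B s
      · obtain ⟨B', hB'⟩ := hwk
        obtain ⟨P, hP1, hP2⟩ := parStrip (fullBv_par (weakBv_fullBv hB')) hBA
        exact ⟨single B', fl_single (weak_ered hB'),
          GRel.padv hP2 (GRel.leaf hP1)⟩
      · have hwbn : WBn B := fun s hs => hwk ⟨s, hs⟩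
        by_cases hsn : SurfNormal B
        · -- surface-normal, not normal: unbiased deep step
          have : ∃ d, Step B d := by
            by_contra hc; push_neg at hc; exact hn fun d hd => hc d hd
          obtain ⟨d, hd⟩ := this
          cases hd with
          | bv hbv =>
            obtain ⟨B', hB'⟩ := fullBv_unbBv_ex hbv
            obtain ⟨P, hP1, hP2⟩ :=
              parStrip (fullBv_par (unbBv_fullBv hB')) hBA
            exact ⟨single B', fl_single (EStep.unb hsn hB'),
              GRel.padv hP2 (GRel.leaf hP1)⟩
          | oplus ho => exact absurd (SStep.oplus ho) (hsn _)
        · -- not surface-normal, no weak β: forced ⊕-split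
          have : ∃ e, SStep B e := by
            by_contra hc; push_neg at hc; exact hsn fun e he => hc e he
          obtain ⟨e, he⟩ := this
          cases he with
          | bv hw => exact absurd hw (hwbn _)
          | oplus ho =>
            obtain ⟨his, _⟩ := wbn_pars_parIs hBA hwbn
            obtain ⟨A₁, A₂, hA, hp1, hp2⟩ := opParIs_fwd ho his
            refine ⟨_, fl_single (EStep.surf hsn (SStep.oplus ho)), ?_⟩
            rw [pair_split]
            exact GRel.split hA (GRel.leaf hp1) (GRel.leaf hp2)
  | padv hp _ ih =>
    obtain ⟨c', h1, h2⟩ := ih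
    exact ⟨c', h1, GRel.padv hp h2⟩
  | split ho _ _ ih1 ih2 =>
    obtain ⟨c₁', f1, g1⟩ := ih1
    obtain ⟨c₂', f2, g2⟩ := ih2
    exact ⟨_, fullLift_add (fullLift_scale _ f1) (fullLift_scale _ f2),
      GRel.split ho g1 g2⟩

/-- `k`-fold iterate of a relation. -/
def IterR (R : MDist → MDist → Prop) : ℕ → MDist → MDist → Prop
  | 0 => fun x y => x = y
  | (k+1) => fun x y => ∃ z, R x z ∧ IterR R k z y

theorem iterR_trans {R k l x y z} (h1 : IterR R k x y) (h2 : IterR R l y z) :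
    IterR R (k + l) x z := by
  induction k generalizing x with
  | zero => rw [Nat.zero_add]; cases h1; exact h2
  | succ k ih =>
    obtain ⟨w, hw, hrest⟩ := h1
    rw [Nat.succ_add]
    exact ⟨w, hw, ih hrest⟩

theorem iterR_of_rtg {R x y} (h : Relation.ReflTransGen R x y) :
    ∃ k, IterR R k x y := by
  induction h with
  | refl => exact ⟨0, rfl⟩
  | tail _ hstep ih =>
    obtain ⟨k, hk⟩ := ih
    exact ⟨k + 1, iterR_trans hk ⟨_, hstep, rfl⟩⟩

theorem rtg_of_iterR {R k x y} (h : IterR R k x y) :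
    Relation.ReflTransGen R x y := by
  induction k generalizing x with
  | zero => cases h; rfl
  | succ k ih =>
    obtain ⟨z, hz, hrest⟩ := h
    exact Relation.ReflTransGen.head hz (ih hrest)

theorem iterFL_add {k} {x x' y y' : MDist} (hx : IterR FL k x x')
    (hy : IterR FL k y y') : IterR FL k (x + y) (x' + y') := by
  induction k generalizing x y with
  | zero => cases hx; cases hy; rfl
  | succ k ih =>
    obtain ⟨z, hz, hrest⟩ := hx
    obtain ⟨w, hw, hrest'⟩ := hy
    exact ⟨z + w, fullLift_add hz hw, ih hrest hrest'⟩

theorem iterFL_scale {k} (p : NNReal) {x x' : MDist} (hx : IterR FL k x x') :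
    IterR FL k (scale p x) (scale p x') := by
  induction k generalizing x with
  | zero => cases hx; rfl
  | succ k ih =>
    obtain ⟨z, hz, hrest⟩ := hx
    exact ⟨scale p z, fullLift_scale p hz, ih hrest⟩

def GoodI (I : MDist → Prop) : Prop := ∀ c, I c → ∃ c', FL c c' ∧ I c'

theorem good_pad {I} (hI : GoodI I) {c} (hc : I c) (k : ℕ) :
    ∃ c', IterR FL k c c' ∧ I c' := by
  induction k generalizing c with
  | zero => exact ⟨c, rfl, hc⟩
  | succ k ih =>
    obtain ⟨c₁, h1, h2⟩ := hI c hc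
    obtain ⟨c', h3, h4⟩ := ih h2
    exact ⟨c', ⟨c₁, h1, h3⟩, h4⟩

theorem grel_good (A : PTm) : GoodI (GRel A) := fun _ h => grel_forced h

/-- Split processing: when the `f`-thread fires a weak `⊕`. -/
theorem grel_split_proc {A S₁ S₂ : PTm} {c : MDist} (h : GRel A c)
    (ho : OplusRed A S₁ S₂) :
    ∃ c₁ c₂, Relation.ReflTransGen FL c (scale (1/2) c₁ + scale (1/2) c₂) ∧
      GRel S₁ c₁ ∧ GRel S₂ c₂ := by
  induction h generalizing S₁ S₂ with
  | @leaf B A hBA =>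
    obtain ⟨B₀, B₁, B₂, hw, hB, hp1, hp2⟩ := opExtract hBA ho
    refine ⟨single B₁, single B₂, ?_, GRel.leaf hp1, GRel.leaf hp2⟩
    refine (estar_fl (Relation.ReflTransGen.lift id (fun _ _ hs => weak_ered hs) _ _ hw)).tail ?_
    rw [← pair_split]
    exact fl_single (EStep.surf (not_surfNormal_of_oplus hB) (SStep.oplus hB))
  | @padv A A' c hp _ ih =>
    obtain ⟨T₁, T₂, hT, hq1, hq2⟩ := opPar ho hp
    obtain ⟨c₁, c₂, hc, g1, g2⟩ := ih hT
    exact ⟨c₁, c₂, hc, GRel.padv hq1 g1, GRel.padv hq2 g2⟩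
  | @split A K₁ K₂ c₁ c₂ hK h1 h2 ih1 ih2 =>
    rcases opComm hK ho with ⟨rfl, rfl⟩ | ⟨E₁₁, E₁₂, E₂₁, E₂₂, a1, a2, a3, a4⟩
    · exact ⟨c₁, c₂, Relation.ReflTransGen.refl, h1, h2⟩
    · obtain ⟨d₁₁, d₁₂, hc1, g11, g12⟩ := ih1 a1
      obtain ⟨d₂₁, d₂₂, hc2, g21, g22⟩ := ih2 a2
      obtain ⟨k₁, hk₁⟩ := iterR_of_rtg hc1
      obtain ⟨k₂, hk₂⟩ := iterR_of_rtg hc2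
      -- pad both chains to a common length
      have good1 : GoodI (fun x => ∃ e₁ e₂,
          x = scale (1/2) e₁ + scale (1/2) e₂ ∧ GRel E₁₁ e₁ ∧ GRel E₁₂ e₂) := by
        rintro x ⟨e₁, e₂, rfl, he1, he2⟩
        obtain ⟨e₁', f1, g1⟩ := grel_forced he1
        obtain ⟨e₂', f2, g2⟩ := grel_forced he2
        exact ⟨_, fullLift_add (fullLift_scale _ f1) (fullLift_scale _ f2),
          e₁', e₂', rfl, g1, g2⟩
      have good2 : GoodI (fun x => ∃ e₁ e₂,
          x = scale (1/2) e₁ + scale (1/2) e₂ ∧ GRel E₂₁ e₁ ∧ GRel E₂₂ e₂) := by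
        rintro x ⟨e₁, e₂, rfl, he1, he2⟩
        obtain ⟨e₁', f1, g1⟩ := grel_forced he1
        obtain ⟨e₂', f2, g2⟩ := grel_forced he2
        exact ⟨_, fullLift_add (fullLift_scale _ f1) (fullLift_scale _ f2),
          e₁', e₂', rfl, g1, g2⟩
      obtain ⟨u₁, hu₁, e₁₁, e₁₂, rfl, ge11, ge12⟩ :=
        good_pad good1 ⟨d₁₁, d₁₂, rfl, g11, g12⟩ (max k₁ k₂ - k₁)
      obtain ⟨u₂, hu₂, e₂₁, e₂₂, rfl, ge21, ge22⟩ :=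
        good_pad good2 ⟨d₂₁, d₂₂, rfl, g21, g22⟩ (max k₁ k₂ - k₂)
      have ch1 : IterR FL (max k₁ k₂) c₁ (scale (1/2) e₁₁ + scale (1/2) e₁₂) := by
        have := iterR_trans hk₁ hu₁
        rwa [Nat.add_sub_cancel' (le_max_left k₁ k₂)] at this
      have ch2 : IterR FL (max k₁ k₂) c₂ (scale (1/2) e₂₁ + scale (1/2) e₂₂) := by
        have := iterR_trans hk₂ hu₂
        rwa [Nat.add_sub_cancel' (le_max_right k₁ k₂)] at this
      refine ⟨scale (1/2) e₁₁ + scale (1/2) e₂₁,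
        scale (1/2) e₁₂ + scale (1/2) e₂₂, ?_, GRel.split a3 ge11 ge21,
        GRel.split a4 ge12 ge22⟩
      have := iterFL_add (iterFL_scale ((1:NNReal)/2) ch1) (iterFL_scale ((1:NNReal)/2) ch2)
      have heq : scale (1/2) (scale (1/2) e₁₁ + scale (1/2) e₁₂)
          + scale (1/2) (scale (1/2) e₂₁ + scale (1/2) e₂₂)
          = scale (1/2) (scale (1/2) e₁₁ + scale (1/2) e₂₁)
          + scale (1/2) (scale (1/2) e₁₂ + scale (1/2) e₂₂) := by
        simp only [scale_add, scale_scale]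
        ac_rfl
      rw [heq] at this
      exact rtg_of_iterR this

/-- A finished thread: all mass sits on the (normal) term `A`. -/
def DoneT (A : PTm) (c : MDist) : Prop :=
  TmNormal A ∧ (∀ x ∈ c, x.2 = A) ∧ massOf c = 1

theorem done_good (A : PTm) : GoodI (DoneT A) := by
  rintro c ⟨h1, h2, h3⟩
  exact ⟨c, fullLift_refl (fun x hx => (h2 x hx) ▸ h1), h1, h2, h3⟩

/-- Endgame: once the thread term is normal, evaluation concentrates all mass on it. -/
theorem grel_normalize {A : PTm} {c : MDist} (h : GRel A c) (hn : TmNormal A) :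
    ∃ c', Relation.ReflTransGen FL c c' ∧ DoneT A c' := by
  induction h with
  | @leaf B A hBA =>
    refine ⟨single A, estar_fl (parsNormalE hBA hn), hn, ?_, by simp [single]⟩
    intro x hx
    rw [single] at hx
    simp at hx
    rw [hx]
  | @padv A A' c hp _ ih =>
    have : A' = A := parNF hp (tmNormal_iff.mp hn).1
    subst this
    exact ih hn
  | split ho _ _ _ _ => exact absurd ho ((tmNormal_iff.mp hn).2 _ _)

theorem tok_good (A : PTm) : GoodI (fun c => GRel A c ∨ DoneT A c) := by
  rintro c (h | h)
  · obtain ⟨c', h1, h2⟩ := grel_forced h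
    exact ⟨c', h1, Or.inl h2⟩
  · obtain ⟨c', h1, h2⟩ := done_good A c h
    exact ⟨c', h1, Or.inr h2⟩
end GRelSec
section Threads
open PTm

abbrev TMS := Multiset (NNReal × PTm × MDist)

def tmap (T : TMS) : MDist := T.map (fun t => (t.1, t.2.1))
def tsumD (T : TMS) : MDist := (T.map (fun t => scale t.1 t.2.2)).sum
def tok (t : NNReal × PTm × MDist) : Prop := GRel t.2.1 t.2.2 ∨ DoneT t.2.1 t.2.2

@[simp] theorem tmap_zero : tmap (0 : TMS) = 0 := rfl
@[simp] theorem tsumD_zero : tsumD (0 : TMS) = 0 := rfl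

@[simp] theorem tmap_cons (t : NNReal × PTm × MDist) (T : TMS) :
    tmap (t ::ₘ T) = (t.1, t.2.1) ::ₘ tmap T := by simp [tmap]

@[simp] theorem tsumD_cons (t : NNReal × PTm × MDist) (T : TMS) :
    tsumD (t ::ₘ T) = scale t.1 t.2.2 + tsumD T := by simp [tsumD]

theorem map_cons_inv {α β : Type*} {s : Multiset α} {f : α → β} {a : β}
    {m : Multiset β} (h : s.map f = a ::ₘ m) :
    ∃ t s', s = t ::ₘ s' ∧ f t = a ∧ s'.map f = m := by
  classical
  have ha : a ∈ s.map f := h ▸ Multiset.mem_cons_self a m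
  obtain ⟨t, ht, hft⟩ := Multiset.mem_map.mp ha
  refine ⟨t, s.erase t, (Multiset.cons_erase ht).symm, hft, ?_⟩
  have h2 : (t ::ₘ s.erase t).map f = a ::ₘ m := by rw [Multiset.cons_erase ht, h]
  rw [Multiset.map_cons, hft] at h2
  exact (Multiset.cons_inj_right a).mp h2

theorem iter_zero (k : ℕ) : IterR FL k 0 0 := by
  induction k with
  | zero => rfl
  | succ k ih => exact ⟨0, FullLift.zero, ih⟩

theorem iter_obs_le {k : ℕ} {x y : MDist} (h : IterR FL k x y) (N : PTm) :
    obsN x N ≤ obsN y N := by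
  induction k generalizing x with
  | zero => cases h; exact le_rfl
  | succ k ih =>
    obtain ⟨z, hz, hrest⟩ := h
    exact (fullLift_obs_le hz N).trans (ih hrest)

theorem tpad (k : ℕ) : ∀ (T : TMS), (∀ t ∈ T, tok t) →
    ∃ T', tmap T' = tmap T ∧ (∀ t ∈ T', tok t) ∧ IterR FL k (tsumD T) (tsumD T') := by
  intro T
  induction T using Multiset.induction with
  | empty => intro _; exact ⟨0, rfl, by simp, by simpa using iter_zero k⟩
  | @cons t T₀ ih =>
    intro htok
    obtain ⟨T₀', h1, h2, h3⟩ := ih (fun x hx => htok x (Multiset.mem_cons_of_mem hx))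
    obtain ⟨p, A, c⟩ := t
    obtain ⟨c', hc', htokc⟩ := good_pad (tok_good A)
      (htok _ (Multiset.mem_cons_self _ _)) k
    refine ⟨(p, A, c') ::ₘ T₀', by simp [h1], ?_, ?_⟩
    · intro x hx
      rcases Multiset.mem_cons.mp hx with rfl | hx
      · exact htokc
      · exact h2 x hx
    · simpa using iterFL_add (iterFL_scale p hc') h3

theorem good_pair {X₁ X₂ : PTm} : GoodI (fun x => ∃ e₁ e₂,
    x = scale (1/2) e₁ + scale (1/2) e₂ ∧ GRel X₁ e₁ ∧ GRel X₂ e₂) := by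
  rintro x ⟨e₁, e₂, rfl, he1, he2⟩
  obtain ⟨e₁', f1, g1⟩ := grel_forced he1
  obtain ⟨e₂', f2, g2⟩ := grel_forced he2
  exact ⟨_, fullLift_add (fullLift_scale _ f1) (fullLift_scale _ f2),
    e₁', e₂', rfl, g1, g2⟩

theorem scale_single_add (p : NNReal) (M : PTm) (n : MDist) :
    scale p (single M) + n = (p, M) ::ₘ n := by
  rw [scale_single, Multiset.singleton_add]

theorem scale_pair_add (p : NNReal) (M₁ M₂ : PTm) (n : MDist) :
    scale p ({((1:NNReal)/2, M₁), ((1:NNReal)/2, M₂)} : MDist) + n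
      = (p * (1/2), M₁) ::ₘ (p * (1/2), M₂) ::ₘ n := by
  rw [show ({((1:NNReal)/2, M₁), ((1:NNReal)/2, M₂)} : MDist)
    = ((1:NNReal)/2, M₁) ::ₘ ((1:NNReal)/2, M₂) ::ₘ 0 from rfl]
  rw [scale_cons, scale_cons, scale_zero, Multiset.cons_add, Multiset.cons_add,
    zero_add]

/-- Simulation of one `⇒`-step of the `f`-sequence by `⇉E`-steps. -/
theorem sim_step {a a' : MDist} (h : Lift Step a a') :
    ∀ T : TMS, a = tmap T → (∀ t ∈ T, tok t) →
    ∃ T', a' = tmap T' ∧ (∀ t ∈ T', tok t) ∧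
      Relation.ReflTransGen FL (tsumD T) (tsumD T') := by
  induction h with
  | zero =>
    intro T h0 _
    have : T = 0 := Multiset.map_eq_zero.mp h0.symm
    subst this
    exact ⟨0, rfl, by simp, Relation.ReflTransGen.refl⟩
  | @keep p M m n _ ih =>
    intro T h0 htok
    obtain ⟨t, T₀, rfl, hft, hmap0⟩ := map_cons_inv h0.symm
    obtain ⟨p', A, c⟩ := t
    obtain ⟨rfl, rfl⟩ : p' = p ∧ A = M := by simpa [Prod.ext_iff] using hft
    obtain ⟨T₀', h1, h2, h3⟩ := ih T₀ hmap0.symm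
      (fun x hx => htok x (Multiset.mem_cons_of_mem hx))
    obtain ⟨k, hk⟩ := iterR_of_rtg h3
    obtain ⟨c', hc', htokc⟩ := good_pad (tok_good A)
      (htok _ (Multiset.mem_cons_self _ _)) k
    refine ⟨(p', A, c') ::ₘ T₀', by simp [← h1], ?_, ?_⟩
    · intro x hx
      rcases Multiset.mem_cons.mp hx with rfl | hx
      · exact htokc
      · exact h2 x hx
    · refine rtg_of_iterR (k := k) (x := tsumD ((p', A, c) ::ₘ T₀)) ?_
      simpa using iterFL_add (iterFL_scale p' hc') hk
  | @step p M d m n hr _ ih =>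
    intro T h0 htok
    obtain ⟨t, T₀, rfl, hft, hmap0⟩ := map_cons_inv h0.symm
    obtain ⟨p', A, c⟩ := t
    obtain ⟨rfl, rfl⟩ : p' = p ∧ A = M := by simpa [Prod.ext_iff] using hft
    have hg : GRel A c := by
      rcases htok _ (Multiset.mem_cons_self _ _) with hg | hd
      · exact hg
      · exact absurd hr (hd.1 _)
    obtain ⟨T₀', h1, h2, h3⟩ := ih T₀ hmap0.symm
      (fun x hx => htok x (Multiset.mem_cons_of_mem hx))
    obtain ⟨k₀, hk₀⟩ := iterR_of_rtg h3
    cases hr with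
    | @bv M' hbv =>
      have hg' : GRel M' c := grel_push hg (fullBv_par hbv)
      obtain ⟨c', hc', hgc'⟩ := good_pad (grel_good M') hg' k₀
      refine ⟨(p', M', c') ::ₘ T₀', ?_, ?_, ?_⟩
      · rw [tmap_cons, ← h1, scale_single_add]
      · intro x hx
        rcases Multiset.mem_cons.mp hx with rfl | hx
        · exact Or.inl hgc'
        · exact h2 x hx
      · refine rtg_of_iterR (k := k₀) (x := tsumD ((p', A, c) ::ₘ T₀)) ?_
        simpa using iterFL_add (iterFL_scale p' hc') hk₀
    | @oplus M₁ M₂ ho =>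
      obtain ⟨e₁, e₂, hchain, hg1, hg2⟩ := grel_split_proc hg ho
      obtain ⟨k₁, hk₁⟩ := iterR_of_rtg hchain
      -- pad to common length K
      set K := max k₁ k₀ with hK
      obtain ⟨u, hu, e₁', e₂', rfl, ge1, ge2⟩ :=
        good_pad good_pair ⟨e₁, e₂, rfl, hg1, hg2⟩ (K - k₁)
      have cth : IterR FL K c (scale (1/2) e₁' + scale (1/2) e₂') := by
        have := iterR_trans hk₁ hu
        rwa [Nat.add_sub_cancel' (le_max_left k₁ k₀)] at this
      obtain ⟨T₀'', hT1, hT2, hT3⟩ := tpad (K - k₀) T₀' h2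
      have T0th : IterR FL K (tsumD T₀) (tsumD T₀'') := by
        have := iterR_trans hk₀ hT3
        rwa [Nat.add_sub_cancel' (le_max_right k₁ k₀)] at this
      refine ⟨(p' * (1/2), M₁, e₁') ::ₘ (p' * (1/2), M₂, e₂') ::ₘ T₀'', ?_, ?_, ?_⟩
      · rw [tmap_cons, tmap_cons, hT1, ← h1, scale_pair_add]
      · intro x hx
        rcases Multiset.mem_cons.mp hx with rfl | hx
        · exact Or.inl ge1
        rcases Multiset.mem_cons.mp hx with rfl | hx
        · exact Or.inl ge2
        · exact hT2 x hx
      · refine rtg_of_iterR (k := K) (x := tsumD ((p', A, c) ::ₘ T₀)) ?_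
        have := iterFL_add (iterFL_scale p' cth) T0th
        rw [tsumD_cons]
        rw [tsumD_cons, tsumD_cons]
        have heq : scale p' (scale (1/2) e₁' + scale (1/2) e₂') + tsumD T₀''
            = scale (p' * (1/2)) e₁' + (scale (p' * (1/2)) e₂' + tsumD T₀'') := by
          rw [scale_add, scale_scale, scale_scale, add_assoc]
        rw [← heq]
        exact this
end Threads
section EndGame
open PTm

def RES (A : PTm) (c : MDist) : Prop :=
  (GRel A c ∨ DoneT A c) ∧ (TmNormal A → DoneT A c)

theorem res_good (A : PTm) : GoodI (RES A) := by
  rintro c ⟨htok, himp⟩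
  by_cases hn : TmNormal A
  · obtain ⟨c', h1, h2⟩ := done_good A c (himp hn)
    exact ⟨c', h1, Or.inr h2, fun _ => h2⟩
  · rcases htok with hg | hd
    · obtain ⟨c', h1, h2⟩ := grel_forced hg
      exact ⟨c', h1, Or.inl h2, fun hn' => absurd hn' hn⟩
    · exact absurd hd.1 hn

theorem resolve {A : PTm} {c : MDist} (h : GRel A c ∨ DoneT A c) :
    ∃ c', Relation.ReflTransGen FL c c' ∧ RES A c' := by
  by_cases hn : TmNormal A
  · rcases h with hg | hd
    · obtain ⟨c', h1, h2⟩ := grel_normalize hg hn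
      exact ⟨c', h1, Or.inr h2, fun _ => h2⟩
    · exact ⟨c, Relation.ReflTransGen.refl, Or.inr hd, fun _ => hd⟩
  · rcases h with hg | hd
    · exact ⟨c, Relation.ReflTransGen.refl, Or.inl hg, fun hn' => absurd hn' hn⟩
    · exact absurd hd.1 hn

theorem obs_eq_mass {c : MDist} {N : PTm} (h : ∀ x ∈ c, x.2 = N)
    (hn : TmNormal N) : obsN c N = massOf c := by
  classical
  induction c using Multiset.induction with
  | empty => simp [obsN_zero]
  | cons x s ih =>
    obtain ⟨q, B⟩ := x
    have hB : B = N := h _ (Multiset.mem_cons_self _ _)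
    rw [obsN_cons, massOf_cons, if_pos ⟨hn, hB⟩,
      ih (fun x hx => h x (Multiset.mem_cons_of_mem hx))]

theorem res_obs {A : PTm} {c : MDist} (h : RES A c) (p : NNReal) (N : PTm) :
    obsN ({(p, A)} : MDist) N ≤ obsN (scale p c) N := by
  classical
  have hsingle : obsN ({(p, A)} : MDist) N
      = if TmNormal N ∧ A = N then p else 0 := by
    rw [show ({(p, A)} : MDist) = (p, A) ::ₘ 0 from rfl, obsN_cons, obsN_zero,
      add_zero]
  rw [hsingle]
  split_ifs with hc
  · obtain ⟨hn, rfl⟩ := hc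
    have hd : DoneT A c := h.2 (by exact hn)
    rw [obsN_scale, obs_eq_mass hd.2.1 hn, hd.2.2, mul_one]
  · exact zero_le

/-- Endgame: concentrate the mass of every finished thread on its normal form. -/
theorem sim_end : ∀ (T : TMS), (∀ t ∈ T, tok t) →
    ∃ T', tmap T' = tmap T ∧ (∀ t ∈ T', tok t) ∧
      Relation.ReflTransGen FL (tsumD T) (tsumD T') ∧
      ∀ N, obsN (tmap T) N ≤ obsN (tsumD T') N := by
  intro T
  induction T using Multiset.induction with
  | empty =>
    intro _
    exact ⟨0, rfl, by simp, Relation.ReflTransGen.refl,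
      fun N => by simp [obsN_zero]⟩
  | @cons t T₀ ih =>
    intro htok
    obtain ⟨p, A, c⟩ := t
    obtain ⟨T₀', hT1, hT2, hT3, hT4⟩ := ih
      (fun x hx => htok x (Multiset.mem_cons_of_mem hx))
    obtain ⟨c₁, hc₁, hres⟩ := resolve (htok _ (Multiset.mem_cons_self _ _))
    obtain ⟨k₁, hk₁⟩ := iterR_of_rtg hc₁
    obtain ⟨k₀, hk₀⟩ := iterR_of_rtg hT3
    set K := max k₁ k₀ with hK
    obtain ⟨c', hc', hres'⟩ := good_pad (res_good A) hres (K - k₁)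
    have cth : IterR FL K c c' := by
      have := iterR_trans hk₁ hc'
      rwa [Nat.add_sub_cancel' (le_max_left k₁ k₀)] at this
    obtain ⟨T₀'', hU1, hU2, hU3⟩ := tpad (K - k₀) T₀' hT2
    have T0th : IterR FL K (tsumD T₀) (tsumD T₀'') := by
      have := iterR_trans hk₀ hU3
      rwa [Nat.add_sub_cancel' (le_max_right k₁ k₀)] at this
    refine ⟨(p, A, c') ::ₘ T₀'', by simp [hU1, hT1], ?_, ?_, ?_⟩
    · intro x hx
      rcases Multiset.mem_cons.mp hx with rfl | hx
      · exact hres'.1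
      · exact hU2 x hx
    · refine rtg_of_iterR (k := K) ?_
      simpa using iterFL_add (iterFL_scale p cth) T0th
    · intro N
      rw [tmap_cons, tsumD_cons]
      show obsN ((p, A) ::ₘ tmap T₀) N ≤ obsN (scale p c' + tsumD T₀'') N
      rw [obsN_add]
      have h1 : obsN ((p, A) ::ₘ tmap T₀) N
          = obsN ({(p, A)} : MDist) N + obsN (tmap T₀) N := by
        rw [show ((p, A) ::ₘ tmap T₀ : MDist) = {(p, A)} + tmap T₀ by
          rw [Multiset.singleton_add], obsN_add]
      rw [h1]
      refine add_le_add (res_obs hres' p N) ?_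
      exact (hT4 N).trans (iter_obs_le hU3 N)
end EndGame
section Final
open PTm

theorem lift_refl (r : PTm → MDist → Prop) : ∀ x : MDist, Lift r x x := by
  intro x
  induction x using Multiset.induction with
  | empty => exact Lift.zero
  | cons a s ih =>
    obtain ⟨p, M⟩ := a
    exact Lift.keep ih

theorem iter_fun {k : ℕ} {x y : MDist} (h : IterR FL k x y) :
    ∃ F : ℕ → MDist, F 0 = x ∧ F k = y ∧ ∀ i < k, FL (F i) (F (i+1)) := by
  induction k generalizing x with
  | zero =>
    exact ⟨fun _ => x, rfl, h, fun i hi => absurd hi (Nat.not_lt_zero i)⟩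
  | succ k ih =>
    obtain ⟨z, hz, hrest⟩ := h
    obtain ⟨F', h0, hk, hs⟩ := ih hrest
    refine ⟨fun i => Nat.casesOn i x F', rfl, hk, ?_⟩
    intro i hi
    cases i with
    | zero => show FL x (F' 0); rw [h0]; exact hz
    | succ j => exact hs j (by omega)

theorem stage {a a' : MDist} (h : Lift Step a a') (T : TMS)
    (h1 : a = tmap T) (h2 : ∀ t ∈ T, tok t) :
    ∃ (T' : TMS) (k : ℕ), a' = tmap T' ∧ (∀ t ∈ T', tok t) ∧
      IterR FL (k+1) (tsumD T) (tsumD T') ∧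
      ∀ N, obsN a' N ≤ obsN (tsumD T') N := by
  obtain ⟨T₁, e1, e2, e3⟩ := sim_step h T h1 h2
  obtain ⟨T₂, f1, f2, f3, f4⟩ := sim_end T₁ e2
  obtain ⟨T₃, g1, g2, g3⟩ := tpad 1 T₂ f2
  obtain ⟨k, hk⟩ := iterR_of_rtg (e3.trans f3)
  refine ⟨T₃, k, e1.trans (f1.symm.trans g1.symm), g2, iterR_trans hk g3, ?_⟩
  intro N
  rw [e1]
  exact (f4 N).trans (iter_obs_le g3 N)

theorem glue (c : ℕ → MDist) (L : ℕ → ℕ) (hL : ∀ n, 1 ≤ L n)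
    (F : ℕ → ℕ → MDist) (hF0 : ∀ n, F n 0 = c n) (hFL : ∀ n, F n (L n) = c (n+1))
    (hstep : ∀ n i, i < L n → FL (F n i) (F n (i+1))) :
    ∃ g : ℕ → MDist, g 0 = c 0 ∧ (∀ i, FL (g i) (g (i+1))) ∧
      ∀ n, ∃ k, g k = c n := by
  classical
  set cum : ℕ → ℕ := fun n => ∑ j ∈ Finset.range n, L j with hcum
  have cum0 : cum 0 = 0 := by simp [hcum]
  have cumS : ∀ n, cum (n+1) = cum n + L n := by
    intro n; simp [hcum, Finset.sum_range_succ]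
  have cum_lt : ∀ n, cum n < cum (n+1) := fun n => by
    rw [cumS]; have := hL n; omega
  have cum_mono : Monotone cum := monotone_nat_of_le_succ (fun n => (cum_lt n).le)
  have cum_ge : ∀ n, n ≤ cum n := by
    intro n
    induction n with
    | zero => omega
    | succ n ih => have := cum_lt n; omega
  set nI : ℕ → ℕ := fun i => Nat.findGreatest (fun n => cum n ≤ i) i with hnI
  have hle : ∀ i, cum (nI i) ≤ i := by
    intro i
    have h00 : cum 0 ≤ i := by rw [cum0]; exact Nat.zero_le i
    exact Nat.findGreatest_spec (P := fun n => cum n ≤ i) (Nat.zero_le i) h00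
  have hlt : ∀ i, i < cum (nI i + 1) := by
    intro i
    by_contra hcon
    push_neg at hcon
    have hni : nI i + 1 ≤ i := le_trans (cum_ge _) hcon
    exact (Nat.findGreatest_is_greatest (Nat.lt_succ_self _) hni) hcon
  have nI_eq : ∀ n j, cum n ≤ j → j < cum (n+1) → nI j = n := by
    intro n j h1 h2
    have hup : nI j ≤ n := by
      by_contra hcon
      push_neg at hcon
      have h3 : cum (n+1) ≤ cum (nI j) := cum_mono hcon
      have h4 := hle j
      omega
    have hdown : n ≤ nI j := Nat.le_findGreatest (le_trans (cum_ge n) h1) h1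
    omega
  refine ⟨fun i => F (nI i) (i - cum (nI i)), ?_, ?_, ?_⟩
  · have h0 : nI 0 = 0 := nI_eq 0 0 (le_of_eq cum0) (by rw [cumS, cum0]; have := hL 0; omega)
    show F (nI 0) (0 - cum (nI 0)) = c 0
    simp only [h0, cum0, Nat.sub_zero]
    exact hF0 0
  · intro i
    show FL (F (nI i) (i - cum (nI i))) (F (nI (i+1)) (i + 1 - cum (nI (i+1))))
    have hj : i - cum (nI i) < L (nI i) := by
      have h1 := hlt i; rw [cumS] at h1; have h2 := hle i; omega
    by_cases hcase : i + 1 < cum (nI i + 1)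
    · have heq : nI (i+1) = nI i := nI_eq (nI i) (i+1) (le_trans (hle i) (by omega)) hcase
      rw [heq]
      have harg : i + 1 - cum (nI i) = (i - cum (nI i)) + 1 := by
        have := hle i; omega
      rw [harg]
      exact hstep _ _ hj
    · have hE : i + 1 = cum (nI i + 1) := by have := hlt i; omega
      have heq : nI (i+1) = nI i + 1 :=
        nI_eq (nI i + 1) (i+1) (le_of_eq hE.symm) (by rw [hE]; exact cum_lt (nI i + 1))
      rw [heq, hE, Nat.sub_self, hF0]
      have harg : i - cum (nI i) + 1 = L (nI i) := by
        rw [cumS] at hE; have := hle i; omega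
      have hst := hstep (nI i) (i - cum (nI i)) hj
      rw [harg, hFL] at hst
      exact hst
  · intro n
    refine ⟨cum n, ?_⟩
    show F (nI (cum n)) (cum n - cum (nI (cum n))) = c n
    have heq : nI (cum n) = n := nI_eq n (cum n) le_rfl (cum_lt n)
    rw [heq, Nat.sub_self, hF0]

theorem tmap_init (m : MDist) :
    tmap (m.map fun x => (x.1, x.2, single x.2)) = m := by
  induction m using Multiset.induction with
  | empty => rfl
  | cons a s ih =>
    obtain ⟨q, B⟩ := a
    rw [Multiset.map_cons, tmap_cons, ih]

theorem tsumD_init (m : MDist) :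
    tsumD (m.map fun x => (x.1, x.2, single x.2)) = m := by
  induction m using Multiset.induction with
  | empty => rfl
  | cons a s ih =>
    obtain ⟨q, B⟩ := a
    rw [Multiset.map_cons, tsumD_cons, ih]
    exact scale_single_add q B s

end Final
/-- **Asymptotic completeness of full unbiased evaluation** in the probabilistic
Call-by-Value λ-calculus: if `m ⇒⇓ q` then there exists a subdistribution `p` over
normal forms with `q ≤ p` (pointwise) and `m ⇉E⇓ p`. -/
theorem prob_cbv_asymptotic_completeness (m : MDist) (hm : IsMDist m)
    (q : PTm → NNReal) (h : MConv (Lift Step) m q) :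
    ∃ p : PTm → NNReal, q ≤ p ∧ MConv (FullLift EStep) m p := by
  classical
  obtain ⟨f, ⟨hf0, hfstep⟩, hlubq⟩ := h
  have hstepall : ∀ n, Lift Step (f n) (f (n+1)) := by
    intro n
    rcases hfstep n with hstep | ⟨hn, _⟩
    · exact hstep
    · exact absurd (lift_refl Step (f n)) (hn _)
  set T0 : TMS := m.map (fun x => (x.1, x.2, single x.2)) with hT0
  have hmap0 : f 0 = tmap T0 := by rw [hf0, hT0, tmap_init]
  have htok0 : ∀ t ∈ T0, tok t := by
    intro t ht
    rw [hT0] at ht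
    obtain ⟨x, _, rfl⟩ := Multiset.mem_map.mp ht
    exact Or.inl (GRel.leaf Relation.ReflTransGen.refl)
  have key : ∀ (n : ℕ) (T : TMS), f n = tmap T → (∀ t ∈ T, tok t) →
      ∃ (T' : TMS) (k : ℕ), f (n+1) = tmap T' ∧ (∀ t ∈ T', tok t) ∧
        IterR FL (k+1) (tsumD T) (tsumD T') ∧
        ∀ N, obsN (f (n+1)) N ≤ obsN (tsumD T') N :=
    fun n T h1 h2 => stage (hstepall n) T h1 h2
  choose FT FK k1 k2 k3 k4 using key
  let G : ∀ n : ℕ, {T : TMS // f n = tmap T ∧ ∀ t ∈ T, tok t} := fun n =>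
    Nat.rec ⟨T0, hmap0, htok0⟩
      (fun n p => ⟨FT n p.1 p.2.1 p.2.2, k1 n p.1 p.2.1 p.2.2,
        k2 n p.1 p.2.1 p.2.2⟩) n
  set c : ℕ → MDist := fun n => tsumD (G n).1 with hc
  set L : ℕ → ℕ := fun n => FK n (G n).1 (G n).2.1 (G n).2.2 + 1 with hLdef
  have hchain : ∀ n, IterR FL (L n) (c n) (c (n+1)) := fun n =>
    k3 n (G n).1 (G n).2.1 (G n).2.2
  have hobs : ∀ n N, obsN (f (n+1)) N ≤ obsN (c (n+1)) N := fun n N =>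
    k4 n (G n).1 (G n).2.1 (G n).2.2 N
  have hc0 : c 0 = m := by
    show tsumD T0 = m
    rw [hT0, tsumD_init]
  choose Ffun hf1 hf2 hf3 using fun n => iter_fun (hchain n)
  obtain ⟨g, hg0, hgstep, hghit⟩ :=
    glue c L (fun n => by
      show 1 ≤ FK n (G n).1 (G n).2.1 (G n).2.2 + 1
      omega) Ffun hf1 hf2 hf3
  have hgm : g 0 = m := by rw [hg0, hc0]
  have hmass : ∀ i, massOf (g i) = massOf m := by
    intro i
    induction i with
    | zero => rw [hgm]
    | succ i ih => rw [fullLift_mass (hgstep i), ih]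
  have hbdd : ∀ N, BddAbove (Set.range fun i => obsN (g i) N) := by
    intro N
    refine ⟨massOf m, ?_⟩
    rintro x ⟨i, rfl⟩
    exact (obsN_le_mass _ N).trans_eq (hmass i)
  refine ⟨fun N => ⨆ i, obsN (g i) N, ?_, g, ⟨hgm, fun i => Or.inl (hgstep i)⟩, ?_⟩
  · intro N
    have hql : IsLUB (Set.range fun n => obsN (f n) N) (q N) := by
      have hp := isLUB_pi.mp hlubq N
      rwa [show Function.eval N '' Set.range (fun i => obsN (f i))
        = Set.range fun n => obsN (f n) N from by rw [← Set.range_comp]; rfl] at hp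
    refine hql.2 ?_
    rintro x ⟨n, rfl⟩
    show obsN (f n) N ≤ ⨆ i, obsN (g i) N
    cases n with
    | zero =>
      have he : obsN (f 0) N = obsN (g 0) N := by rw [hf0, hgm]
      rw [he]
      exact le_ciSup (hbdd N) 0
    | succ n =>
      obtain ⟨kk, hkk⟩ := hghit (n+1)
      calc obsN (f (n+1)) N ≤ obsN (c (n+1)) N := hobs n N
        _ = obsN (g kk) N := by rw [hkk]
        _ ≤ _ := le_ciSup (hbdd N) kk
  · rw [isLUB_pi]
    intro N
    rw [show Function.eval N '' Set.range (fun i => obsN (g i))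
      = Set.range fun i => obsN (g i) N from by rw [← Set.range_comp]; rfl]
    show IsLUB (Set.range fun i => obsN (g i) N) (⨆ i, obsN (g i) N)
    exact isLUB_ciSup (hbdd N)
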